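/- arXiv:2007.09069 — 8 statements merged into one kernel-verified Lean document; each statement's English description precedes it below -/
import Mathlib

section
/- Let X be a finite-dimensional vector space, Z ⊆ X a linear subspace, π:X→Z linear and surjective with dim X = 1 + dim Z, and let K = {x∈X : ⟨f_j, x⟩ ≥ 0 for j=1,…,J} for covectors f_1,…,f_J∈X*. Then there exists a constant C_K > 0 such that for every z∈Z, either π(x) ≠ z for every x∈K, or there exists x∈K with π(x)=z and |x| ≤ C_K|z|_Z. -/
open Set

lemma key_feas {J : ℕ} (a b : Fin J → ℝ) (t₀ c : ℝ) (ht₀ : 0 ≤ t₀) (hc : 0 ≤ c)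
    (h : ∀ j, 0 ≤ a j + t₀ * b j)
    (hbc : ∀ j, 0 < b j → -(a j) / b j ≤ c) :
    ∃ t, 0 ≤ t ∧ t ≤ c ∧ ∀ j, 0 ≤ a j + t * b j := by
  by_cases hT : ∃ j, 0 < b j
  · set T : Finset (Fin J) := Finset.univ.filter (fun j => 0 < b j) with hTdef
    have hTne : T.Nonempty := by
      obtain ⟨j, hj⟩ := hT
      exact ⟨j, by simp [hTdef, hj]⟩
    set L : ℝ := T.sup' hTne (fun j => -(a j) / b j) with hLdef
    obtain ⟨j₀, hj₀T, hj₀⟩ := T.exists_mem_eq_sup' hTne (fun j => -(a j) / b j)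
    have hLeq : L = -(a j₀) / b j₀ := hLdef.trans hj₀
    have hj₀b : 0 < b j₀ := by
      have := hj₀T; simp [hTdef] at this; exact this
    have hLle : L ≤ c := hLeq ▸ hbc j₀ hj₀b
    have hLt₀ : L ≤ t₀ := by
      rw [hLeq, div_le_iff₀ hj₀b]
      nlinarith [h j₀]
    refine ⟨max L 0, le_max_right _ _, max_le hLle hc, fun j => ?_⟩
    by_cases hbj : 0 < b j
    · have hjT : j ∈ T := by simp [hTdef, hbj]
      have hle : -(a j) / b j ≤ max L 0 :=
        le_trans (Finset.le_sup' (fun j => -(a j) / b j) hjT) (le_max_left _ _)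
      rw [div_le_iff₀ hbj] at hle
      nlinarith
    · push_neg at hbj
      have hmax : max L 0 ≤ t₀ := max_le hLt₀ ht₀
      nlinarith [h j]
  · push_neg at hT
    refine ⟨0, le_refl _, hc, fun j => ?_⟩
    nlinarith [h j, hT j]

theorem stmt5
    {X Z : Type*} [NormedAddCommGroup X] [NormedSpace ℝ X] [FiniteDimensional ℝ X]
    [NormedAddCommGroup Z] [NormedSpace ℝ Z] [FiniteDimensional ℝ Z]
    (π : X →L[ℝ] Z) (hsurj : Function.Surjective π)
    (hdim : Module.finrank ℝ X = Module.finrank ℝ Z + 1)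
    (J : ℕ) (fK : Fin J → StrongDual ℝ X)
    (K : Set X) (hK : K = {x : X | ∀ j : Fin J, 0 ≤ fK j x}) :
    ∃ C > (0:ℝ), ∀ z : Z,
      (∀ x ∈ K, π x ≠ z) ∨ ∃ x ∈ K, π x = z ∧ ‖x‖ ≤ C * ‖z‖ := by
  classical
  have hrange : LinearMap.range (π : X →ₗ[ℝ] Z) = ⊤ :=
    LinearMap.range_eq_top.mpr hsurj
  -- a continuous linear section of π
  obtain ⟨σ, hσ⟩ : ∃ σ : Z →L[ℝ] X, ∀ z : Z, π (σ z) = z := by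
    obtain ⟨σₗ, hσₗ⟩ := (π : X →ₗ[ℝ] Z).exists_rightInverse_of_surjective hrange
    exact ⟨σₗ.toContinuousLinearMap, fun z => by
      have := LinearMap.congr_fun hσₗ z; simpa using this⟩
  -- kernel has dimension 1; get a generator
  obtain ⟨e, heker, hespan⟩ :
      ∃ e : X, π e = 0 ∧ ∀ x : X, π x = 0 → ∃ t : ℝ, x = t • e := by
    have hker : Module.finrank ℝ (LinearMap.ker (π : X →ₗ[ℝ] Z)) = 1 := by
      have h1 := LinearMap.finrank_range_add_finrank_ker (π : X →ₗ[ℝ] Z)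
      rw [hrange, finrank_top] at h1
      omega
    obtain ⟨e', _, he'span⟩ := finrank_eq_one_iff'.mp hker
    refine ⟨(e' : X), e'.2, fun x hx => ?_⟩
    obtain ⟨t, ht⟩ := he'span ⟨x, hx⟩
    exact ⟨t, (congrArg Subtype.val ht).symm⟩
  -- a uniform constant bounding the division ratios
  obtain ⟨Cm, hCm0, hCmle⟩ :
      ∃ Cm : ℝ, 0 ≤ Cm ∧ ∀ j : Fin J, ∀ v : X, |fK j v| = |fK j e| →
        0 < fK j v → ∀ z : Z, -(fK j (σ z)) / fK j v ≤ Cm * ‖z‖ := by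
    refine ⟨∑ j : Fin J, ‖(fK j).comp σ‖ / |fK j e|,
      Finset.sum_nonneg fun j _ => div_nonneg (norm_nonneg _) (abs_nonneg _),
      fun j v habs hv z => ?_⟩
    have h1 : -(fK j (σ z)) ≤ ‖(fK j).comp σ‖ * ‖z‖ := by
      have := ((fK j).comp σ).le_opNorm z
      have h2 : |fK j (σ z)| ≤ ‖(fK j).comp σ‖ * ‖z‖ := by
        simpa [Real.norm_eq_abs] using this
      nlinarith [abs_nonneg (fK j (σ z)), neg_abs_le (fK j (σ z))]
    rw [div_le_iff₀ hv]
    have hterm : ‖(fK j).comp σ‖ / |fK j e| ≤ ∑ j : Fin J, ‖(fK j).comp σ‖ / |fK j e| :=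
      Finset.single_le_sum (f := fun j => ‖(fK j).comp σ‖ / |fK j e|)
        (fun i _ => div_nonneg (norm_nonneg _) (abs_nonneg _)) (Finset.mem_univ j)
    have habs' : |fK j v| = fK j v := abs_of_pos hv
    have hkey : ‖(fK j).comp σ‖ ≤ (∑ j : Fin J, ‖(fK j).comp σ‖ / |fK j e|) * fK j v := by
      rw [← habs, habs'] at hterm
      rwa [div_le_iff₀ hv] at hterm
    calc -(fK j (σ z)) ≤ ‖(fK j).comp σ‖ * ‖z‖ := h1
      _ ≤ ((∑ j : Fin J, ‖(fK j).comp σ‖ / |fK j e|) * fK j v) * ‖z‖ :=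
          mul_le_mul_of_nonneg_right hkey (norm_nonneg _)
      _ = (∑ j : Fin J, ‖(fK j).comp σ‖ / |fK j e|) * ‖z‖ * fK j v := by ring
  refine ⟨‖σ‖ + Cm * ‖e‖ + 1, by positivity, fun z => ?_⟩
  by_cases hz : ∃ x ∈ K, π x = z
  · right
    obtain ⟨x₀, hx₀K, hx₀π⟩ := hz
    obtain ⟨t₀, ht₀⟩ := hespan (x₀ - σ z) (by simp [map_sub, hx₀π, hσ z])
    have ht₀' : x₀ = σ z + t₀ • e := by rw [← ht₀]; abel
    -- orient e so the coefficient is nonnegative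
    obtain ⟨ee, s, hs0, hx₀', heeker, heenorm, heeabs⟩ :
        ∃ (ee : X) (s : ℝ), 0 ≤ s ∧ x₀ = σ z + s • ee ∧ π ee = 0 ∧ ‖ee‖ = ‖e‖ ∧
          ∀ j, |fK j ee| = |fK j e| := by
      rcases le_or_gt 0 t₀ with h | h
      · exact ⟨e, t₀, h, ht₀', heker, rfl, fun j => rfl⟩
      · refine ⟨-e, -t₀, by linarith, ?_, by simp [heker], by simp, fun j => by simp⟩
        rw [ht₀']; simp [smul_neg]
    have hfeas : ∀ j, 0 ≤ fK j (σ z) + s * fK j ee := by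
      intro j
      have hx : fK j x₀ = fK j (σ z) + s * fK j ee := by
        rw [hx₀', map_add, map_smul]; simp
      rw [hK] at hx₀K
      have := hx₀K j
      linarith [hx ▸ this]
    obtain ⟨t, ht0, htc, htfeas⟩ := key_feas (fun j => fK j (σ z)) (fun j => fK j ee)
      s (Cm * ‖z‖) hs0 (by positivity) hfeas
      (fun j hj => hCmle j ee (heeabs j) hj z)
    refine ⟨σ z + t • ee, ?_, ?_, ?_⟩
    · rw [hK]
      intro j
      have := htfeas j
      simpa [map_add, map_smul] using this
    · simp [map_add, map_smul, hσ z, heeker]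
    · calc ‖σ z + t • ee‖ ≤ ‖σ z‖ + ‖t • ee‖ := norm_add_le _ _
        _ ≤ ‖σ‖ * ‖z‖ + t * ‖e‖ := by
            rw [norm_smul, Real.norm_of_nonneg ht0, heenorm]
            exact add_le_add (σ.le_opNorm z) le_rfl
        _ ≤ ‖σ‖ * ‖z‖ + (Cm * ‖z‖) * ‖e‖ :=
            add_le_add le_rfl (mul_le_mul_of_nonneg_right htc (norm_nonneg _))
        _ ≤ (‖σ‖ + Cm * ‖e‖ + 1) * ‖z‖ := by nlinarith [norm_nonneg z]
  · left
    push_neg at hz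
    exact hz
end

section
/- Let (V,‖·‖) be a normed space and f:[a,b]→V a bounded measurable function such that ‖f(t)−f(s)‖² ≤ ∫ₛᵗ ‖f(t)−f(τ)‖ g(τ)dτ + ‖f(t)−f(s)‖ ∫ₛᵗ h(τ)dτ for every a≤s≤t≤b, where g,h∈L¹(a,b) are nonnegative. Then ‖f(t)−f(s)‖ ≤ ∫ₛᵗ (g(τ)+h(τ))dτ for every a≤s≤t≤b. -/
open MeasureTheory Set

theorem stmt6
    {V : Type*} [NormedAddCommGroup V] [NormedSpace ℝ V]
    [MeasurableSpace V] [BorelSpace V]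
    (a b : ℝ) (hab : a ≤ b)
    (f : ℝ → V) (hfmeas : Measurable f)
    (hfbdd : ∃ M : ℝ, ∀ t ∈ Icc a b, ‖f t‖ ≤ M)
    (g h : ℝ → ℝ)
    (hg : IntervalIntegrable g volume a b) (hh : IntervalIntegrable h volume a b)
    (hgnonneg : ∀ τ ∈ Icc a b, 0 ≤ g τ) (hhnonneg : ∀ τ ∈ Icc a b, 0 ≤ h τ)
    (hineq : ∀ s t : ℝ, a ≤ s → s ≤ t → t ≤ b →
      ‖f t - f s‖ ^ 2 ≤ (∫ τ in s..t, ‖f t - f τ‖ * g τ)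
        + ‖f t - f s‖ * ∫ τ in s..t, h τ) :
    ∀ s t : ℝ, a ≤ s → s ≤ t → t ≤ b →
      ‖f t - f s‖ ≤ ∫ τ in s..t, (g τ + h τ) := by
  intro s t hs hst htb
  obtain ⟨M, hM⟩ := hfbdd
  have hta : a ≤ t := hs.trans hst
  have hsb : s ≤ b := hst.trans htb
  have htI : t ∈ Icc a b := ⟨hta, htb⟩
  set C := 2 * M with hC
  have hφbdd : ∀ τ ∈ Icc a b, ‖f t - f τ‖ ≤ C := by
    intro τ hτ
    calc ‖f t - f τ‖ ≤ ‖f t‖ + ‖f τ‖ := norm_sub_le _ _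
    _ ≤ M + M := add_le_add (hM t htI) (hM τ hτ)
    _ = C := by ring
  -- membership helper
  have hmem : ∀ σ, a ≤ σ → σ ≤ b → σ ∈ Set.uIcc a b := by
    intro σ h1 h2
    rw [Set.uIcc_of_le hab]; exact ⟨h1, h2⟩
  have hgmono : ∀ σ₁ σ₂, a ≤ σ₁ → σ₁ ≤ b → a ≤ σ₂ → σ₂ ≤ b →
      IntervalIntegrable g volume σ₁ σ₂ := by
    intro σ₁ σ₂ h1 h2 h3 h4
    exact hg.mono_set (Set.uIcc_subset_uIcc (hmem _ h1 h2) (hmem _ h3 h4))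
  have hhmono : ∀ σ₁ σ₂, a ≤ σ₁ → σ₁ ≤ b → a ≤ σ₂ → σ₂ ≤ b →
      IntervalIntegrable h volume σ₁ σ₂ := by
    intro σ₁ σ₂ h1 h2 h3 h4
    exact hh.mono_set (Set.uIcc_subset_uIcc (hmem _ h1 h2) (hmem _ h3 h4))
  set B := sSup ((fun σ => ‖f t - f σ‖) '' Icc s t) with hBdef
  have hbddA : BddAbove ((fun σ => ‖f t - f σ‖) '' Icc s t) := by
    refine ⟨C, ?_⟩
    rintro x ⟨σ, hσ, rfl⟩
    exact hφbdd σ ⟨hs.trans hσ.1, hσ.2.trans htb⟩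
  have hφB : ∀ σ ∈ Icc s t, ‖f t - f σ‖ ≤ B := fun σ hσ =>
    le_csSup hbddA (Set.mem_image_of_mem _ hσ)
  have hB0 : 0 ≤ B := (norm_nonneg _).trans (hφB t (Set.right_mem_Icc.2 hst))
  set G := ∫ τ in s..t, g τ with hGdef
  set H := ∫ τ in s..t, h τ with hHdef
  have hG0 : 0 ≤ G := intervalIntegral.integral_nonneg hst
    (fun τ hτ => hgnonneg τ ⟨hs.trans hτ.1, hτ.2.trans htb⟩)
  have hH0 : 0 ≤ H := intervalIntegral.integral_nonneg hst
    (fun τ hτ => hhnonneg τ ⟨hs.trans hτ.1, hτ.2.trans htb⟩)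
  have hφmeas : Measurable fun τ => ‖f t - f τ‖ :=
    ((continuous_const.sub continuous_id).norm.measurable).comp hfmeas
  -- key quadratic bound
  have key : ∀ σ ∈ Icc s t, ‖f t - f σ‖ ^ 2 ≤ B * G + ‖f t - f σ‖ * H := by
    intro σ hσ
    have haσ : a ≤ σ := hs.trans hσ.1
    have hσb : σ ≤ b := hσ.2.trans htb
    have h1 := hineq σ t haσ hσ.2 htb
    have hgi : IntervalIntegrable g volume σ t := hgmono σ t haσ hσb hta htb
    have hhi : IntervalIntegrable h volume σ t := hhmono σ t haσ hσb hta htb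
    have hi1 : IntervalIntegrable (fun τ => ‖f t - f τ‖ * g τ) volume σ t := by
      rw [intervalIntegrable_iff, uIoc_of_le hσ.2]
      have hgI : IntegrableOn g (Ioc σ t) volume := by
        have := hgi; rw [intervalIntegrable_iff, uIoc_of_le hσ.2] at this; exact this
      refine Integrable.mono' (hgI.const_mul C) ?_ ?_
      · exact (hφmeas.aestronglyMeasurable.mul hgI.aestronglyMeasurable)
      · refine (ae_restrict_iff' measurableSet_Ioc).2 (ae_of_all _ ?_)
        intro τ hτ
        have hτab : τ ∈ Icc a b := ⟨haσ.trans (le_of_lt hτ.1), hτ.2.trans htb⟩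
        have hg0 := hgnonneg τ hτab
        rw [Real.norm_eq_abs, abs_of_nonneg (mul_nonneg (norm_nonneg _) hg0)]
        exact mul_le_mul_of_nonneg_right (hφbdd τ hτab) hg0
    have step1 : (∫ τ in σ..t, ‖f t - f τ‖ * g τ) ≤ B * ∫ τ in σ..t, g τ := by
      rw [← intervalIntegral.integral_const_mul]
      refine intervalIntegral.integral_mono_on hσ.2 hi1 (hgi.const_mul B) ?_
      intro τ hτ
      have hτab : τ ∈ Icc a b := ⟨haσ.trans hτ.1, hτ.2.trans htb⟩
      exact mul_le_mul_of_nonneg_right (hφB τ ⟨hσ.1.trans hτ.1, hτ.2⟩) (hgnonneg τ hτab)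
    have hsplitg : G = (∫ τ in s..σ, g τ) + ∫ τ in σ..t, g τ :=
      (intervalIntegral.integral_add_adjacent_intervals (hgmono s σ hs hsb haσ hσb) hgi).symm
    have hsplith : H = (∫ τ in s..σ, h τ) + ∫ τ in σ..t, h τ :=
      (intervalIntegral.integral_add_adjacent_intervals (hhmono s σ hs hsb haσ hσb) hhi).symm
    have hgσ0 : 0 ≤ ∫ τ in s..σ, g τ := intervalIntegral.integral_nonneg hσ.1
      (fun τ hτ => hgnonneg τ ⟨hs.trans hτ.1, hτ.2.trans hσb⟩)
    have hhσ0 : 0 ≤ ∫ τ in s..σ, h τ := intervalIntegral.integral_nonneg hσ.1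
      (fun τ hτ => hhnonneg τ ⟨hs.trans hτ.1, hτ.2.trans hσb⟩)
    have hgle : (∫ τ in σ..t, g τ) ≤ G := by rw [hsplitg]; linarith
    have hhle : (∫ τ in σ..t, h τ) ≤ H := by rw [hsplith]; linarith
    have := norm_nonneg (f t - f σ)
    nlinarith [mul_le_mul_of_nonneg_left hgle hB0,
      mul_le_mul_of_nonneg_left hhle (norm_nonneg (f t - f σ))]
  -- deduce B ≤ G + H
  have hBle : B ≤ Real.sqrt (B * (G + H)) := by
    apply csSup_le ⟨_, Set.mem_image_of_mem _ (Set.right_mem_Icc.2 hst)⟩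
    rintro x ⟨σ, hσ, rfl⟩
    have h2 := key σ hσ
    have hφσB := hφB σ hσ
    have hsq : ‖f t - f σ‖ ^ 2 ≤ B * (G + H) := by nlinarith [hH0]
    calc ‖f t - f σ‖ = Real.sqrt (‖f t - f σ‖ ^ 2) := (Real.sqrt_sq (norm_nonneg _)).symm
    _ ≤ Real.sqrt (B * (G + H)) := Real.sqrt_le_sqrt hsq
  have hBsq : B ^ 2 ≤ B * (G + H) := by
    have h3 : B ^ 2 ≤ Real.sqrt (B * (G + H)) ^ 2 := by
      apply pow_le_pow_left₀ hB0 hBle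
    rwa [Real.sq_sqrt (mul_nonneg hB0 (by linarith))] at h3
  have hfinal : ‖f t - f s‖ ≤ G + H := by
    rcases eq_or_lt_of_le hB0 with hB | hB
    · have := hφB s (Set.left_mem_Icc.2 hst); linarith
    · have hBGH : B ≤ G + H := by nlinarith
      have := hφB s (Set.left_mem_Icc.2 hst); linarith
  have : (∫ τ in s..t, (g τ + h τ)) = G + H :=
    intervalIntegral.integral_add (hgmono s t hs hsb hta htb) (hhmono s t hs hsb hta htb)
  linarith [hfinal, this.ge]
end

section
/- Let X be a reflexive Banach space and R:[a,b]×X→[0,∞] a ψ-regular functional. For f:[a,b]→X, define the R-variation V_R(f;s,t) := lim_{n→∞} Σ_{k=1}^n R(t_{k−1}, f(t_k)−f(t_{k−1})) over fine sequences of partitions s=t_0<…<t_n=t with mesh tending to 0. If f is R-absolutely continuous (i.e., absolutely continuous with ∫ₐᵇ R(τ,ḟ(τ))dτ<∞), then V_R(f;s,t) = ∫ₛᵗ R(τ, ḟ(τ))dτ for every a≤s≤t≤b. -/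
open MeasureTheory Set Filter ENNReal Topology

/-- A fine sequence of partitions of `[s,t]`: for each `j`, `P j 0 = s < P j 1 < … < P j (n j) = t`,
and the mesh tends to `0` as `j → ∞`. -/
def IsFineSeq (s t : ℝ) (n : ℕ → ℕ) (P : ℕ → ℕ → ℝ) : Prop :=
  (∀ j, P j 0 = s) ∧ (∀ j, P j (n j) = t) ∧
    (∀ j, ∀ k, k < n j → P j k < P j (k + 1)) ∧
    ∀ ε > (0:ℝ), ∃ N : ℕ, ∀ j ≥ N, ∀ k < n j, P j (k + 1) - P j k < ε

/-- The Riemann-type sum `Σ_{k=1}^{n} R(t_{k-1}, f(t_k) - f(t_{k-1}))` over a partition. -/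
noncomputable def partSum {X : Type*} [NormedAddCommGroup X]
    (R : ℝ → X → ℝ≥0∞) (f : ℝ → X) (n : ℕ) (P : ℕ → ℝ) : ℝ≥0∞ :=
  ∑ k ∈ Finset.range n, R (P k) (f (P (k + 1)) - f (P k))

/-- `V` is the `R`-variation of `f` on `[s,t]`: along every fine sequence of partitions the
partition sums converge to `V`. -/
def RVarEq {X : Type*} [NormedAddCommGroup X]
    (R : ℝ → X → ℝ≥0∞) (f : ℝ → X) (s t : ℝ) (V : ℝ≥0∞) : Prop :=
  ∀ (n : ℕ → ℕ) (P : ℕ → ℕ → ℝ), IsFineSeq s t n P →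
    Tendsto (fun j => partSum R f (n j) (P j)) atTop (nhds V)

/-- `f` is absolutely continuous on `[a,b]` with derivative (density) `f'`. -/
def HasACDeriv {X : Type*} [NormedAddCommGroup X] [NormedSpace ℝ X] [CompleteSpace X]
    (a b : ℝ) (f f' : ℝ → X) : Prop :=
  IntervalIntegrable f' MeasureTheory.volume a b ∧
    ∀ t ∈ Set.Icc a b, f t = f a + ∫ τ in a..t, f' τ

section AuxLemmas

lemma partMono (P : ℕ → ℝ) (m : ℕ) (h : ∀ k < m, P k ≤ P (k + 1)) :
    ∀ i j, i ≤ j → j ≤ m → P i ≤ P j := by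
  intro i j hij hjm
  induction j, hij using Nat.le_induction with
  | base => exact le_refl _
  | succ j hij ih =>
    have hjm' : j < m := Nat.lt_of_succ_le hjm
    exact (ih hjm'.le).trans (h j hjm')

lemma lintegral_Ioc_partition (φ : ℝ → ℝ≥0∞) (P : ℕ → ℝ) (m : ℕ)
    (h : ∀ k < m, P k ≤ P (k + 1)) :
    ∑ k ∈ Finset.range m, ∫⁻ τ in Ioc (P k) (P (k + 1)), φ τ
      = ∫⁻ τ in Ioc (P 0) (P m), φ τ := by
  induction m with
  | zero => simp
  | succ m ih =>
    have h' : ∀ k < m, P k ≤ P (k + 1) := fun k hk => h k (hk.trans (Nat.lt_succ_self m))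
    rw [Finset.sum_range_succ, ih h']
    have h0m : P 0 ≤ P m := partMono P m h' 0 m (Nat.zero_le m) le_rfl
    have hmm1 : P m ≤ P (m + 1) := h m (Nat.lt_succ_self m)
    rw [← Ioc_union_Ioc_eq_Ioc h0m hmm1,
      Measure.restrict_union (Set.Ioc_disjoint_Ioc_of_le le_rfl) measurableSet_Ioc,
      lintegral_add_measure]

lemma mem_Ioc_partition (P : ℕ → ℝ) :
    ∀ (m : ℕ), (∀ k < m, P k < P (k + 1)) → ∀ x ∈ Ioc (P 0) (P m),
      ∃ k, k < m ∧ x ∈ Ioc (P k) (P (k + 1)) := by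
  intro m
  induction m with
  | zero => exact fun _ x hx => absurd hx.2 (not_le.mpr hx.1)
  | succ m ih =>
    intro h x hx
    by_cases hxm : x ≤ P m
    · obtain ⟨k, hk, hmem⟩ := ih (fun k hk => h k (hk.trans (Nat.lt_succ_self m))) x ⟨hx.1, hxm⟩
      exact ⟨k, hk.trans (Nat.lt_succ_self m), hmem⟩
    · exact ⟨m, Nat.lt_succ_self m, ⟨not_le.mp hxm, hx.2⟩⟩

lemma mem_Ioc_partition_unique (P : ℕ → ℝ) (m : ℕ) (h : ∀ k < m, P k ≤ P (k + 1))
    {x : ℝ} {k k' : ℕ} (hk : k < m) (hk' : k' < m)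
    (h1 : x ∈ Ioc (P k) (P (k + 1))) (h2 : x ∈ Ioc (P k') (P (k' + 1))) : k = k' := by
  by_contra hne
  rcases Nat.lt_or_ge k k' with hlt | hge
  · have hle : P (k + 1) ≤ P k' := partMono P m h (k + 1) k' hlt hk'.le
    have : x < x := lt_of_le_of_lt (h1.2.trans hle) h2.1
    exact lt_irrefl x this
  · have hlt : k' < k := lt_of_le_of_ne hge (fun e => hne e.symm)
    have hle : P (k' + 1) ≤ P k := partMono P m h (k' + 1) k hlt hk.le
    have : x < x := lt_of_le_of_lt (h2.2.trans hle) h1.1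
    exact lt_irrefl x this

lemma liminf_add_const_le (f : ℕ → ℝ≥0∞) (c : ℝ≥0∞) :
    Filter.liminf (fun j => f j + c) Filter.atTop ≤ Filter.liminf f Filter.atTop + c := by
  rw [Filter.liminf_eq, Filter.liminf_eq]
  refine sSup_le fun x hx => ?_
  have hx' : ∀ᶠ j in atTop, x - c ≤ f j := by
    filter_upwards [hx] with j hj
    exact tsub_le_iff_right.mpr hj
  have h1 : x - c ≤ sSup {a | ∀ᶠ j in atTop, a ≤ f j} := le_sSup hx'
  calc x ≤ (x - c) + c := le_tsub_add
    _ ≤ _ + c := add_le_add_left h1 c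

lemma jensen_sublinear {X : Type*} [NormedAddCommGroup X] [NormedSpace ℝ X] [CompleteSpace X]
    [MeasurableSpace X] [BorelSpace X]
    {α : Type*} [MeasurableSpace α] (μ : Measure α) [IsFiniteMeasure μ]
    (F : X → ℝ≥0∞) (hF0 : F 0 = 0)
    (hconv : ∀ u v : X, ∀ θ : ℝ, θ ∈ Icc (0:ℝ) 1 →
      F (θ • u + (1 - θ) • v) ≤ ENNReal.ofReal θ * F u + ENNReal.ofReal (1 - θ) * F v)
    (hhom : ∀ l : ℝ, 0 < l → ∀ v : X, F (l • v) = ENNReal.ofReal l * F v)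
    (hlsc : LowerSemicontinuous F)
    (h : α → X) (hint : Integrable h μ) :
    F (∫ x, h x ∂μ) ≤ ∫⁻ x, F (h x) ∂μ := by
  by_contra hcon
  push_neg at hcon
  set w := ∫ x, h x ∂μ with hw
  set I := ∫⁻ x, F (h x) ∂μ with hI
  have hItop : I ≠ ⊤ := ne_top_of_lt hcon
  have hFmeas : Measurable F := hlsc.measurable
  have hmeas : AEMeasurable (fun x => F (h x)) μ :=
    hFmeas.comp_aemeasurable hint.aemeasurable
  have hae : ∀ᵐ x ∂μ, F (h x) < ⊤ := ae_lt_top' hmeas hItop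
  obtain ⟨q, hq1, hq2⟩ := exists_between hcon
  have hqtop : q ≠ ⊤ := ne_top_of_lt hq2
  set r := q.toReal with hr
  have hq0 : q ≠ 0 := by
    intro h0
    rw [h0] at hq1
    exact absurd hq1 (by simp)
  have hr0 : 0 < r := ENNReal.toReal_pos hq0 hqtop
  have hofr : ENNReal.ofReal r = q := ENNReal.ofReal_toReal hqtop
  set E : Set (X × ℝ) := {p | 0 ≤ p.2 ∧ F p.1 ≤ ENNReal.ofReal p.2} with hE
  have hconvE : Convex ℝ E := by
    rintro p ⟨hp1, hp2⟩ q' ⟨hq1', hq2'⟩ θ₁ θ₂ hθ₁ hθ₂ hsum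
    have hθ₂' : θ₂ = 1 - θ₁ := by linarith
    constructor
    · show (0:ℝ) ≤ θ₁ * p.2 + θ₂ * q'.2
      exact add_nonneg (mul_nonneg hθ₁ hp1) (mul_nonneg hθ₂ hq1')
    · show F (θ₁ • p.1 + θ₂ • q'.1) ≤ ENNReal.ofReal (θ₁ * p.2 + θ₂ * q'.2)
      subst hθ₂'
      calc F (θ₁ • p.1 + (1 - θ₁) • q'.1)
          ≤ ENNReal.ofReal θ₁ * F p.1 + ENNReal.ofReal (1 - θ₁) * F q'.1 :=
            hconv _ _ _ ⟨hθ₁, by linarith⟩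
        _ ≤ ENNReal.ofReal θ₁ * ENNReal.ofReal p.2
              + ENNReal.ofReal (1 - θ₁) * ENNReal.ofReal q'.2 :=
            add_le_add (mul_le_mul_right hp2 _) (mul_le_mul_right hq2' _)
        _ = ENNReal.ofReal (θ₁ * p.2 + (1 - θ₁) * q'.2) := by
            rw [← ENNReal.ofReal_mul hθ₁, ← ENNReal.ofReal_mul (by linarith),
              ← ENNReal.ofReal_add (mul_nonneg hθ₁ hp1) (mul_nonneg (by linarith) hq1')]
  have hclosedE : IsClosed E := by
    rw [← isOpen_compl_iff, isOpen_iff_mem_nhds]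
    rintro ⟨x, y⟩ hxy
    simp only [hE, mem_compl_iff, mem_setOf_eq, not_and_or, not_le] at hxy
    rcases hxy with hy | hFx
    · have hopen : {p : X × ℝ | p.2 < 0} ∈ 𝓝 ((x, y) : X × ℝ) :=
        (isOpen_lt continuous_snd continuous_const).mem_nhds hy
      filter_upwards [hopen] with p hp
      exact fun hmem => absurd hmem.1 (not_le.mpr hp)
    · obtain ⟨c, hc1, hc2⟩ := exists_between hFx
      have h1 : ∀ᶠ u in 𝓝 x, c < F u := hlsc x c hc2
      have h2 : ∀ᶠ z in 𝓝 y, ENNReal.ofReal z < c :=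
        (ENNReal.continuous_ofReal.continuousAt).preimage_mem_nhds (Iio_mem_nhds hc1)
      rw [nhds_prod_eq]
      filter_upwards [Filter.prod_mem_prod h1 h2] with p hp
      exact fun hmem => absurd hmem.2 (not_le.mpr (hp.2.trans hp.1))
  have hmemE : ∀ p ∈ E, ∀ l : ℝ, 0 < l → l • p ∈ E := by
    rintro p ⟨hp1, hp2⟩ l hl
    constructor
    · show (0:ℝ) ≤ l * p.2
      exact mul_nonneg hl.le hp1
    · show F (l • p.1) ≤ ENNReal.ofReal (l * p.2)
      rw [hhom l hl, ENNReal.ofReal_mul hl.le]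
      exact mul_le_mul_right hp2 _
  have hwr : ((w, r) : X × ℝ) ∉ E := by
    rintro ⟨-, h2⟩
    rw [hofr] at h2
    exact absurd h2 (not_le.mpr hq2)
  obtain ⟨φ, u', hElt, hu'⟩ := geometric_hahn_banach_closed_point hconvE hclosedE hwr
  have h0E : (((0:X), (0:ℝ)) : X × ℝ) ∈ E := ⟨le_refl 0, by simp [hF0]⟩
  have hu'pos : 0 < u' := by
    have := hElt _ h0E
    simpa using (show φ 0 < u' from this)
  have hφE : ∀ p ∈ E, φ p ≤ 0 := by
    intro p hp
    by_contra hpos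
    push_neg at hpos
    have hl : 0 < (u' + 1) / φ p := div_pos (by linarith) hpos
    have hlt := hElt _ (hmemE p hp _ hl)
    rw [φ.map_smul, smul_eq_mul, div_mul_cancel₀ _ (ne_of_gt hpos)] at hlt
    linarith
  set β := φ ((0:X), (1:ℝ)) with hβdef
  have hβ : β ≤ 0 := hφE _ ⟨zero_le_one, by simp [hF0]⟩
  set L : X →L[ℝ] ℝ := φ.comp (ContinuousLinearMap.inl ℝ X ℝ) with hL
  have hsplit : ∀ p : X × ℝ, φ p = L p.1 + p.2 * β := by
    intro p
    have hp : p = ((p.1, (0:ℝ)) : X × ℝ) + p.2 • (((0:X), (1:ℝ)) : X × ℝ) := by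
      ext <;> simp
    conv_lhs => rw [hp]
    rw [map_add, φ.map_smul, smul_eq_mul]
    rfl
  have haept : ∀ᵐ x ∂μ, L (h x) ≤ -β * (F (h x)).toReal := by
    filter_upwards [hae] with x hx
    have hmem : ((h x, (F (h x)).toReal) : X × ℝ) ∈ E :=
      ⟨ENNReal.toReal_nonneg, by rw [ENNReal.ofReal_toReal hx.ne]⟩
    have := hφE _ hmem
    rw [hsplit] at this
    simp only at this
    nlinarith [this]
  have hintL : Integrable (fun x => L (h x)) μ := L.integrable_comp hint
  have hintR : Integrable (fun x => (F (h x)).toReal) μ :=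
    integrable_toReal_of_lintegral_ne_top hmeas hItop
  have hintR' : Integrable (fun x => -β * (F (h x)).toReal) μ := hintR.const_mul _
  have hIle : ∫ x, L (h x) ∂μ ≤ ∫ x, -β * (F (h x)).toReal ∂μ :=
    integral_mono_ae hintL hintR' haept
  have hLw : ∫ x, L (h x) ∂μ = L w := L.integral_comp_comm hint
  have hT : ∫ x, (F (h x)).toReal ∂μ = I.toReal := integral_toReal hmeas hae
  have hRw : ∫ x, -β * (F (h x)).toReal ∂μ = -β * I.toReal := by
    rw [integral_const_mul, hT]
  rw [hLw, hRw] at hIle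
  have hwr2 : 0 < L w + r * β := by
    have h5 := hu'
    rw [hsplit ((w, r) : X × ℝ)] at h5
    simp only at h5
    linarith
  have hTr : I.toReal < r := by
    have : I < ENNReal.ofReal r := by rw [hofr]; exact hq1
    exact (ENNReal.lt_ofReal_iff_toReal_lt hItop).mp this
  nlinarith [hIle, hwr2, hTr,
    mul_nonpos_of_nonpos_of_nonneg hβ (by linarith : (0:ℝ) ≤ r - I.toReal)]

end AuxLemmas

theorem stmt8
    {X : Type*} [NormedAddCommGroup X] [NormedSpace ℝ X] [CompleteSpace X]
    (hrefl : Function.Surjective (NormedSpace.inclusionInDoubleDual ℝ X))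
    (a b : ℝ) (hab : a ≤ b)
    (ψ : X → ℝ≥0∞) (c : ℝ) (hc : 0 < c)
    (hψ0 : ψ 0 = 0)
    (hψconv : ∀ u v : X, ∀ θ : ℝ, θ ∈ Icc (0:ℝ) 1 →
      ψ (θ • u + (1 - θ) • v) ≤ ENNReal.ofReal θ * ψ u + ENNReal.ofReal (1 - θ) * ψ v)
    (hψhom : ∀ l : ℝ, 0 < l → ∀ v : X, ψ (l • v) = ENNReal.ofReal l * ψ v)
    (hψlsc : LowerSemicontinuous ψ)
    (hψcoer : ∀ v : X, ENNReal.ofReal (c * ‖v‖) ≤ ψ v)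
    (R : ℝ → X → ℝ≥0∞) (αl αu : ℝ) (hαl : 0 < αl) (hαlu : αl ≤ αu)
    (hRconv : ∀ t ∈ Icc a b, ∀ u v : X, ∀ θ : ℝ, θ ∈ Icc (0:ℝ) 1 →
      R t (θ • u + (1 - θ) • v) ≤ ENNReal.ofReal θ * R t u + ENNReal.ofReal (1 - θ) * R t v)
    (hRhom : ∀ t ∈ Icc a b, ∀ l : ℝ, 0 < l → ∀ v : X, R t (l • v) = ENNReal.ofReal l * R t v)
    (hRlsc : ∀ t ∈ Icc a b, LowerSemicontinuous (R t))
    (hR0 : ∀ t ∈ Icc a b, R t 0 = 0)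
    (hRlow : ∀ t ∈ Icc a b, ∀ v : X, ENNReal.ofReal αl * ψ v ≤ R t v)
    (hRup : ∀ t ∈ Icc a b, ∀ v : X, R t v ≤ ENNReal.ofReal αu * ψ v)
    (σ : ℝ → ℝ) (hσcont : ContinuousOn σ (Icc 0 (b - a)))
    (hσmono : MonotoneOn σ (Icc 0 (b - a)))
    (hσ0 : σ 0 = 0) (hσnonneg : ∀ s : ℝ, 0 ≤ σ s)
    (hRtime : ∀ s t : ℝ, a ≤ s → s ≤ t → t ≤ b → ∀ v : X, ψ v ≠ ⊤ →
      R t v ≤ R s v + ψ v * ENNReal.ofReal (σ (t - s)) ∧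
        R s v ≤ R t v + ψ v * ENNReal.ofReal (σ (t - s)))
    -- `f` is `R`-absolutely continuous
    (f f' : ℝ → X) (hAC : HasACDeriv a b f f')
    (hRAC : (∫⁻ τ in Icc a b, R τ (f' τ)) < ⊤) :
    ∀ s t : ℝ, a ≤ s → s ≤ t → t ≤ b →
      RVarEq R f s t (∫⁻ τ in Icc s t, R τ (f' τ)) := by
  classical
  letI : MeasurableSpace X := borel X
  haveI : BorelSpace X := ⟨rfl⟩
  intro s t has hst htb
  intro n P hfine
  obtain ⟨hP0, hPn, hPlt, hmesh⟩ := hfine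
  have hIccst : Icc s t ⊆ Icc a b := Icc_subset_Icc has htb
  have hIocst : Ioc s t ⊆ Icc a b := fun x hx => hIccst ⟨hx.1.le, hx.2⟩
  have hPle : ∀ j, ∀ k < n j, P j k ≤ P j (k + 1) := fun j k hk => (hPlt j k hk).le
  have hPmono : ∀ j, ∀ i k, i ≤ k → k ≤ n j → P j i ≤ P j k :=
    fun j => partMono (P j) (n j) (hPle j)
  have hPmem : ∀ j, ∀ k, k ≤ n j → P j k ∈ Icc s t := by
    intro j k hk
    constructor
    · rw [← hP0 j]; exact hPmono j 0 k (Nat.zero_le k) hk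
    · rw [← hPn j]; exact hPmono j k (n j) hk le_rfl
  have hPmemab : ∀ j, ∀ k, k ≤ n j → P j k ∈ Icc a b := fun j k hk => hIccst (hPmem j k hk)
  have hIk_sub : ∀ j k, k < n j → Ioc (P j k) (P j (k + 1)) ⊆ Ioc s t := by
    intro j k hk x hx
    exact ⟨lt_of_le_of_lt (hPmem j k hk.le).1 hx.1, hx.2.trans (hPmem j (k + 1) hk).2⟩
  -- integrability of f'
  have hf'ab : IntegrableOn f' (Ioc a b) volume := hAC.1.1
  have hf'Icc : IntegrableOn f' (Icc a b) volume := by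
    unfold IntegrableOn
    rw [Measure.restrict_congr_set (Ioc_ae_eq_Icc).symm]
    exact hf'ab
  have hψm : Measurable ψ := hψlsc.measurable
  have hΦae : ∀ S : Set ℝ, S ⊆ Icc a b →
      AEMeasurable (fun τ => ψ (f' τ)) (volume.restrict S) := by
    intro S hS
    have h1 : AEStronglyMeasurable f' (volume.restrict S) :=
      hf'Icc.aestronglyMeasurable.mono_measure (Measure.restrict_mono hS le_rfl)
    exact hψm.comp_aemeasurable h1.aemeasurable
  set C : ℝ≥0∞ := ∫⁻ τ in Ioc a b, ψ (f' τ) with hCdef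
  set V : ℝ≥0∞ := ∫⁻ τ in Icc s t, R τ (f' τ) with hVdef
  have hαl0 : ENNReal.ofReal αl ≠ 0 := (ENNReal.ofReal_pos.mpr hαl).ne'
  have hgab_fin : (∫⁻ τ in Icc a b, R τ (f' τ)) ≠ ⊤ := hRAC.ne
  have hCfin : C ≠ ⊤ := by
    intro htop
    have h1 : ∫⁻ τ in Ioc a b, ENNReal.ofReal αl * ψ (f' τ) ≤ ∫⁻ τ in Ioc a b, R τ (f' τ) := by
      refine lintegral_mono_ae ?_
      filter_upwards [ae_restrict_mem measurableSet_Ioc] with τ hτ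
      exact hRlow τ (Ioc_subset_Icc_self hτ) (f' τ)
    rw [lintegral_const_mul'' _ (hΦae _ Ioc_subset_Icc_self)] at h1
    rw [← hCdef, htop, ENNReal.mul_top hαl0] at h1
    have h2 : ∫⁻ τ in Ioc a b, R τ (f' τ) ≤ ∫⁻ τ in Icc a b, R τ (f' τ) :=
      lintegral_mono' (Measure.restrict_mono Ioc_subset_Icc_self le_rfl) le_rfl
    exact hgab_fin (top_le_iff.mp (h1.trans h2))
  have hVIoc : ∫⁻ τ in Ioc s t, R τ (f' τ) = V := setLIntegral_congr Ioc_ae_eq_Icc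
  have hVfin : V ≠ ⊤ := by
    rw [hVdef]
    exact ne_top_of_le_ne_top hgab_fin
      (lintegral_mono' (Measure.restrict_mono hIccst le_rfl) le_rfl)
  have hΦC : ∫⁻ τ in Ioc s t, ψ (f' τ) ≤ C :=
    lintegral_mono' (Measure.restrict_mono (Ioc_subset_Ioc has htb) le_rfl) le_rfl
  -- sigma is small near 0
  have hσsmall : ∀ ε : ℝ, 0 < ε → ∃ δ > 0, ∀ d : ℝ, 0 ≤ d → d ≤ b - a → d < δ → σ d < ε := by
    intro ε hε
    have h0mem : (0:ℝ) ∈ Icc 0 (b - a) := ⟨le_refl 0, by linarith⟩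
    have hcw := hσcont 0 h0mem
    have hmem : {x : ℝ | σ x < ε} ∈ 𝓝[Icc 0 (b - a)] 0 :=
      hcw (Iio_mem_nhds (by rw [hσ0]; exact hε))
    rw [Metric.mem_nhdsWithin_iff] at hmem
    obtain ⟨δ, hδ, hsub⟩ := hmem
    refine ⟨δ, hδ, fun d hd0 hdba hdδ => ?_⟩
    exact hsub ⟨by simpa [Real.dist_eq, abs_of_nonneg hd0] using hdδ, ⟨hd0, hdba⟩⟩
  -- increments of f
  have hvincr : ∀ j, ∀ k, k < n j →
      f (P j (k + 1)) - f (P j k) = ∫ τ in Ioc (P j k) (P j (k + 1)), f' τ := by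
    intro j k hk
    have hu := hPmemab j k hk.le
    have hv := hPmemab j (k + 1) hk
    have huv : P j k ≤ P j (k + 1) := hPle j k hk
    have hmemuIcc : ∀ x ∈ Icc a b, x ∈ uIcc a b := by
      intro x hx; rw [uIcc_of_le hab]; exact hx
    have hia : IntervalIntegrable f' volume a (P j k) :=
      hAC.1.mono_set (uIcc_subset_uIcc (hmemuIcc a ⟨le_rfl, hab⟩) (hmemuIcc _ hu))
    have hib : IntervalIntegrable f' volume a (P j (k + 1)) :=
      hAC.1.mono_set (uIcc_subset_uIcc (hmemuIcc a ⟨le_rfl, hab⟩) (hmemuIcc _ hv))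
    rw [hAC.2 _ hv, hAC.2 _ hu, add_sub_add_left_eq_sub,
      intervalIntegral.integral_interval_sub_left hib hia,
      intervalIntegral.integral_of_le huv]
  have hFinM : ∀ u v : ℝ, IsFiniteMeasure (volume.restrict (Ioc u v)) := by
    intro u v
    constructor
    rw [Measure.restrict_apply_univ]
    exact measure_Ioc_lt_top
  have hf'uv : ∀ u v : ℝ, a ≤ u → v ≤ b → IntegrableOn f' (Ioc u v) volume :=
    fun u v hu hv => hf'ab.mono_set (Ioc_subset_Ioc hu hv)
  -- Jensen for R τ₀ and for ψ
  have hjensen : ∀ (τ₀ u v : ℝ), τ₀ ∈ Icc a b → a ≤ u → v ≤ b →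
      R τ₀ (∫ τ in Ioc u v, f' τ) ≤ ∫⁻ τ in Ioc u v, R τ₀ (f' τ) := by
    intro τ₀ u v hτ₀ hu hv
    haveI := hFinM u v
    exact jensen_sublinear (volume.restrict (Ioc u v)) (R τ₀) (hR0 τ₀ hτ₀)
      (hRconv τ₀ hτ₀) (hRhom τ₀ hτ₀) (hRlsc τ₀ hτ₀) f' (hf'uv u v hu hv)
  have hjensenψ : ∀ u v : ℝ, a ≤ u → v ≤ b →
      ψ (∫ τ in Ioc u v, f' τ) ≤ ∫⁻ τ in Ioc u v, ψ (f' τ) := by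
    intro u v hu hv
    haveI := hFinM u v
    exact jensen_sublinear (volume.restrict (Ioc u v)) ψ hψ0
      hψconv hψhom hψlsc f' (hf'uv u v hu hv)
  -- the averages
  set w : ℕ → ℕ → X :=
    fun j k => (P j (k + 1) - P j k)⁻¹ • ∫ τ in Ioc (P j k) (P j (k + 1)), f' τ with hwdef
  have hΔpos : ∀ j, ∀ k, k < n j → 0 < P j (k + 1) - P j k :=
    fun j k hk => sub_pos.mpr (hPlt j k hk)
  have hIkΦC : ∀ j k, k < n j → ∫⁻ τ in Ioc (P j k) (P j (k + 1)), ψ (f' τ) ≤ C := by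
    intro j k hk
    exact lintegral_mono' (Measure.restrict_mono
      (Ioc_subset_Ioc (hPmemab j k hk.le).1 (hPmemab j (k + 1) hk).2) le_rfl) le_rfl
  have hψw : ∀ j, ∀ k, ∀ hk : k < n j,
      ENNReal.ofReal (P j (k + 1) - P j k) * ψ (w j k)
          ≤ ∫⁻ τ in Ioc (P j k) (P j (k + 1)), ψ (f' τ) ∧ ψ (w j k) ≠ ⊤ := by
    intro j k hk
    have hΔ := hΔpos j k hk
    have h1 : ψ (w j k) = ENNReal.ofReal (P j (k + 1) - P j k)⁻¹
        * ψ (∫ τ in Ioc (P j k) (P j (k + 1)), f' τ) := hψhom _ (inv_pos.mpr hΔ) _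
    have h2 : ψ (∫ τ in Ioc (P j k) (P j (k + 1)), f' τ)
        ≤ ∫⁻ τ in Ioc (P j k) (P j (k + 1)), ψ (f' τ) :=
      hjensenψ _ _ (hPmemab j k hk.le).1 (hPmemab j (k + 1) hk).2
    constructor
    · rw [h1, ← mul_assoc, ← ENNReal.ofReal_mul hΔ.le, mul_inv_cancel₀ hΔ.ne',
        ENNReal.ofReal_one, one_mul]
      exact h2
    · rw [h1]
      exact ENNReal.mul_ne_top ENNReal.ofReal_ne_top
        (ne_top_of_le_ne_top hCfin (h2.trans (hIkΦC j k hk)))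
  -- representation of the partition sum
  have hSrep : ∀ j, partSum R f (n j) (P j)
      = ∑ k ∈ Finset.range (n j),
          ENNReal.ofReal (P j (k + 1) - P j k) * R (P j k) (w j k) := by
    intro j
    unfold partSum
    refine Finset.sum_congr rfl fun k hk => ?_
    rw [Finset.mem_range] at hk
    have hΔ := hΔpos j k hk
    have hrw : f (P j (k + 1)) - f (P j k) = (P j (k + 1) - P j k) • w j k := by
      rw [hwdef]
      simp only
      rw [smul_smul, mul_inv_cancel₀ hΔ.ne', one_smul, hvincr j k hk]
    rw [hrw, hRhom _ (hPmemab j k hk.le) _ hΔ]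
  -- clamping
  set clamp : ℝ → ℝ := fun τ => max a (min τ b) with hclampdef
  have hclampmem : ∀ τ, clamp τ ∈ Icc a b :=
    fun τ => ⟨le_max_left _ _, max_le hab (min_le_right _ _)⟩
  have hclampeq : ∀ τ ∈ Icc a b, clamp τ = τ := by
    intro τ hτ
    rw [hclampdef]
    simp only
    rw [min_eq_left hτ.2, max_eq_right hτ.1]
  have hclamplip : ∀ τ τ' : ℝ, |clamp τ - clamp τ'| ≤ |τ - τ'| := by
    intro τ τ'
    rw [hclampdef]
    simp only
    calc |max a (min τ b) - max a (min τ' b)|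
        = |max (min τ b) a - max (min τ' b) a| := by rw [max_comm a, max_comm a]
      _ ≤ |min τ b - min τ' b| := abs_max_sub_max_le_abs _ _ _
      _ ≤ max |τ - τ'| |b - b| := abs_min_sub_min_le_max _ _ _ _
      _ = |τ - τ'| := by simp
  -- measurability of τ ↦ R (clamp τ) v
  have hRcmeas : ∀ v : X, Measurable (fun τ => R (clamp τ) v) := by
    intro v
    by_cases hψv : ψ v = ⊤
    · have hconst : ∀ τ, R (clamp τ) v = ⊤ := by
        intro τ
        have h1 := hRlow (clamp τ) (hclampmem τ) v
        rw [hψv, ENNReal.mul_top hαl0] at h1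
        exact top_le_iff.mp h1
      have : (fun τ => R (clamp τ) v) = fun _ => (⊤ : ℝ≥0∞) := funext hconst
      rw [this]
      exact measurable_const
    · apply Continuous.measurable
      rw [continuous_iff_continuousAt]
      intro τ₀
      have hfin : ∀ τ, R (clamp τ) v ≠ ⊤ := fun τ =>
        ne_top_of_le_ne_top (ENNReal.mul_ne_top ENNReal.ofReal_ne_top hψv)
          (hRup (clamp τ) (hclampmem τ) v)
      rw [ContinuousAt, ENNReal.tendsto_nhds (hfin τ₀)]
      intro ε hε
      obtain ⟨ε', hε'pos, hε'le⟩ : ∃ x : ℝ, 0 < x ∧ ENNReal.ofReal x ≤ ε := by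
        rcases eq_or_ne ε ⊤ with h | h
        · exact ⟨1, one_pos, h ▸ le_top⟩
        · exact ⟨ε.toReal, ENNReal.toReal_pos hε.ne' h, (ENNReal.ofReal_toReal h).le⟩
      set m := (ψ v).toReal with hm
      have hψv' : ψ v = ENNReal.ofReal m := (ENNReal.ofReal_toReal hψv).symm
      have hm0 : 0 ≤ m := ENNReal.toReal_nonneg
      obtain ⟨δ, hδpos, hδ⟩ := hσsmall (ε' / (m + 1)) (div_pos hε'pos (by linarith))
      have hkey : ∀ τ : ℝ, |τ - τ₀| < δ →
          R (clamp τ) v ∈ Icc (R (clamp τ₀) v - ε) (R (clamp τ₀) v + ε) := by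
        intro τ hτ
        have hu1 := hclampmem τ
        have hu2 := hclampmem τ₀
        have hd1 : |clamp τ - clamp τ₀| ≤ |τ - τ₀| := hclamplip τ τ₀
        have hdba : |clamp τ - clamp τ₀| ≤ b - a := by
          rw [abs_sub_le_iff]
          constructor <;> linarith [hu1.1, hu1.2, hu2.1, hu2.2]
        have hσlt : σ |clamp τ - clamp τ₀| < ε' / (m + 1) :=
          hδ _ (abs_nonneg _) hdba (lt_of_le_of_lt hd1 hτ)
        have herr : ψ v * ENNReal.ofReal (σ |clamp τ - clamp τ₀|) ≤ ε := by
          have h1 : m * σ |clamp τ - clamp τ₀| ≤ m * (ε' / (m + 1)) :=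
            mul_le_mul_of_nonneg_left hσlt.le hm0
          have h2 : m * (ε' / (m + 1)) ≤ ε' := by
            rw [mul_div_assoc', div_le_iff₀ (by linarith : (0:ℝ) < m + 1)]
            nlinarith
          calc ψ v * ENNReal.ofReal (σ |clamp τ - clamp τ₀|)
              = ENNReal.ofReal (m * σ |clamp τ - clamp τ₀|) := by
                rw [hψv', ← ENNReal.ofReal_mul hm0]
            _ ≤ ENNReal.ofReal ε' := ENNReal.ofReal_le_ofReal (by linarith)
            _ ≤ ε := hε'le
        rcases le_total (clamp τ) (clamp τ₀) with hc | hc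
        · have hh := hRtime (clamp τ) (clamp τ₀) hu1.1 hc hu2.2 v hψv
          have habs : clamp τ₀ - clamp τ = |clamp τ - clamp τ₀| := by
            rw [abs_sub_comm, abs_of_nonneg (by linarith)]
          rw [habs] at hh
          constructor
          · rw [tsub_le_iff_right]
            exact hh.1.trans (add_le_add_right herr _)
          · exact hh.2.trans (add_le_add_right herr _)
        · have hh := hRtime (clamp τ₀) (clamp τ) hu2.1 hc hu1.2 v hψv
          have habs : clamp τ - clamp τ₀ = |clamp τ - clamp τ₀| := by
            rw [abs_of_nonneg (by linarith)]
          rw [habs] at hh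
          constructor
          · rw [tsub_le_iff_right]
            exact hh.2.trans (add_le_add_right herr _)
          · exact hh.1.trans (add_le_add_right herr _)
      have hev : ∀ᶠ τ in 𝓝 τ₀, |τ - τ₀| < δ := by
        filter_upwards [Metric.ball_mem_nhds τ₀ hδpos] with τ hτ
        rw [Metric.mem_ball, Real.dist_eq] at hτ
        exact hτ
      filter_upwards [hev] with τ hτ using hkey τ hτ
  -- the step functions G
  set G : ℕ → ℝ → ℝ≥0∞ := fun j τ => ∑ k ∈ Finset.range (n j),
      (Ioc (P j k) (P j (k + 1))).indicator (fun τ' => R (clamp τ') (w j k)) τ with hGdef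
  have hGmeas : ∀ j, Measurable (G j) := by
    intro j
    apply Finset.measurable_sum
    intro k _
    exact (hRcmeas (w j k)).indicator measurableSet_Ioc
  have hGpiece : ∀ j, ∀ k, ∀ hk : k < n j, ∀ τ ∈ Ioc (P j k) (P j (k + 1)),
      G j τ = R (clamp τ) (w j k) := by
    intro j k hk τ hτ
    rw [hGdef]
    simp only
    rw [Finset.sum_eq_single_of_mem k (Finset.mem_range.mpr hk)]
    · exact indicator_of_mem hτ _
    · intro k' hk' hne
      apply indicator_of_notMem
      intro hτ'
      exact hne (mem_Ioc_partition_unique (P j) (n j) (hPle j)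
        (Finset.mem_range.mp hk') hk hτ' hτ)
  -- pointwise upper estimate
  have hptup : ∀ (e : ℝ) (j k : ℕ), k < n j →
      (∀ τ ∈ Ioc (P j k) (P j (k + 1)), σ (τ - P j k) ≤ e) →
      ∀ τ ∈ Ioc (P j k) (P j (k + 1)),
        R (P j k) (f' τ) ≤ R τ (f' τ) + ψ (f' τ) * ENNReal.ofReal e := by
    intro e j k hk hσe τ hτ
    have hτab : τ ∈ Icc a b := hIocst (hIk_sub j k hk hτ)
    by_cases hΦτ : ψ (f' τ) = ⊤
    · have hgτ : R τ (f' τ) = ⊤ := by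
        have h1 := hRlow τ hτab (f' τ)
        rw [hΦτ, ENNReal.mul_top hαl0] at h1
        exact top_le_iff.mp h1
      rw [hgτ, top_add]
      exact le_top
    · have h1 := (hRtime (P j k) τ (hPmemab j k hk.le).1 hτ.1.le hτab.2 (f' τ) hΦτ).2
      refine h1.trans (add_le_add_right ?_ _)
      exact mul_le_mul_right (ENNReal.ofReal_le_ofReal (hσe τ hτ)) _
  -- upper bound
  have hup : ∀ e : ℝ, 0 ≤ e → ∀ j,
      (∀ k, k < n j → ∀ τ ∈ Ioc (P j k) (P j (k + 1)), σ (τ - P j k) ≤ e) →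
      partSum R f (n j) (P j) ≤ V + ENNReal.ofReal e * C := by
    intro e he j hσe
    have step1 : partSum R f (n j) (P j) ≤ ∑ k ∈ Finset.range (n j),
        ∫⁻ τ in Ioc (P j k) (P j (k + 1)), (R τ (f' τ) + ψ (f' τ) * ENNReal.ofReal e) := by
      unfold partSum
      refine Finset.sum_le_sum fun k hk => ?_
      rw [Finset.mem_range] at hk
      have hjen : R (P j k) (f (P j (k + 1)) - f (P j k))
          ≤ ∫⁻ τ in Ioc (P j k) (P j (k + 1)), R (P j k) (f' τ) := by
        rw [hvincr j k hk]
        exact hjensen (P j k) (P j k) (P j (k + 1)) (hPmemab j k hk.le)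
          (hPmemab j k hk.le).1 (hPmemab j (k + 1) hk).2
      refine hjen.trans (lintegral_mono_ae ?_)
      filter_upwards [ae_restrict_mem measurableSet_Ioc] with τ hτ
      exact hptup e j k hk (hσe k hk) τ hτ
    have hsum := lintegral_Ioc_partition
      (fun τ => R τ (f' τ) + ψ (f' τ) * ENNReal.ofReal e) (P j) (n j) (hPle j)
    rw [hP0 j, hPn j] at hsum
    have step2 : (∫⁻ τ in Ioc s t, (R τ (f' τ) + ψ (f' τ) * ENNReal.ofReal e))
        = (∫⁻ τ in Ioc s t, R τ (f' τ)) + ∫⁻ τ in Ioc s t, ψ (f' τ) * ENNReal.ofReal e :=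
      lintegral_add_right' _ ((hΦae _ hIocst).mul_const _)
    have step3 : (∫⁻ τ in Ioc s t, ψ (f' τ) * ENNReal.ofReal e)
        = (∫⁻ τ in Ioc s t, ψ (f' τ)) * ENNReal.ofReal e :=
      lintegral_mul_const'' _ (hΦae _ hIocst)
    calc partSum R f (n j) (P j)
        ≤ ∑ k ∈ Finset.range (n j),
            ∫⁻ τ in Ioc (P j k) (P j (k + 1)), (R τ (f' τ) + ψ (f' τ) * ENNReal.ofReal e) := step1
      _ = ∫⁻ τ in Ioc s t, (R τ (f' τ) + ψ (f' τ) * ENNReal.ofReal e) := hsum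
      _ = (∫⁻ τ in Ioc s t, R τ (f' τ)) + (∫⁻ τ in Ioc s t, ψ (f' τ)) * ENNReal.ofReal e := by
          rw [step2, step3]
      _ ≤ V + C * ENNReal.ofReal e :=
          add_le_add (le_of_eq hVIoc) (mul_le_mul_left hΦC _)
      _ = V + ENNReal.ofReal e * C := by rw [mul_comm]
  -- lower bound for the step-function integrals
  have hlo : ∀ e : ℝ, 0 ≤ e → ∀ j,
      (∀ k, k < n j → ∀ τ ∈ Ioc (P j k) (P j (k + 1)), σ (τ - P j k) ≤ e) →
      (∫⁻ τ in Ioc s t, G j τ) ≤ partSum R f (n j) (P j) + ENNReal.ofReal e * C := by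
    intro e he j hσe
    have hdec := lintegral_Ioc_partition (G j) (P j) (n j) (hPle j)
    rw [hP0 j, hPn j] at hdec
    have hpiece : ∀ k, k < n j → (∫⁻ τ in Ioc (P j k) (P j (k + 1)), G j τ)
        ≤ ENNReal.ofReal (P j (k + 1) - P j k) * R (P j k) (w j k)
          + ENNReal.ofReal e * ∫⁻ τ in Ioc (P j k) (P j (k + 1)), ψ (f' τ) := by
      intro k hk
      have hψwk := hψw j k hk
      have hcong : (∫⁻ τ in Ioc (P j k) (P j (k + 1)), G j τ)
          = ∫⁻ τ in Ioc (P j k) (P j (k + 1)), R (clamp τ) (w j k) :=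
        setLIntegral_congr_fun measurableSet_Ioc
          (fun τ hτ => hGpiece j k hk τ hτ)
      have hbound : ∀ τ ∈ Ioc (P j k) (P j (k + 1)),
          R (clamp τ) (w j k) ≤ R (P j k) (w j k) + ψ (w j k) * ENNReal.ofReal e := by
        intro τ hτ
        have hτab : τ ∈ Icc a b := hIocst (hIk_sub j k hk hτ)
        rw [hclampeq τ hτab]
        have h1 := (hRtime (P j k) τ (hPmemab j k hk.le).1 hτ.1.le hτab.2 (w j k) hψwk.2).1
        refine h1.trans (add_le_add_right ?_ _)
        exact mul_le_mul_right (ENNReal.ofReal_le_ofReal (hσe k hk τ hτ)) _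
      calc (∫⁻ τ in Ioc (P j k) (P j (k + 1)), G j τ)
          = ∫⁻ τ in Ioc (P j k) (P j (k + 1)), R (clamp τ) (w j k) := hcong
        _ ≤ ∫⁻ _τ in Ioc (P j k) (P j (k + 1)),
              (R (P j k) (w j k) + ψ (w j k) * ENNReal.ofReal e) := by
            refine lintegral_mono_ae ?_
            filter_upwards [ae_restrict_mem measurableSet_Ioc] with τ hτ
            exact hbound τ hτ
        _ = (R (P j k) (w j k) + ψ (w j k) * ENNReal.ofReal e)
              * volume (Ioc (P j k) (P j (k + 1))) := setLIntegral_const _ _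
        _ = ENNReal.ofReal (P j (k + 1) - P j k) * R (P j k) (w j k)
              + ENNReal.ofReal e
                * (ENNReal.ofReal (P j (k + 1) - P j k) * ψ (w j k)) := by
            rw [Real.volume_Ioc]; ring
        _ ≤ ENNReal.ofReal (P j (k + 1) - P j k) * R (P j k) (w j k)
              + ENNReal.ofReal e * ∫⁻ τ in Ioc (P j k) (P j (k + 1)), ψ (f' τ) :=
            add_le_add_right (mul_le_mul_right hψwk.1 _) _
    have hΦsum := lintegral_Ioc_partition (fun τ => ψ (f' τ)) (P j) (n j) (hPle j)
    rw [hP0 j, hPn j] at hΦsum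
    calc (∫⁻ τ in Ioc s t, G j τ)
        = ∑ k ∈ Finset.range (n j), ∫⁻ τ in Ioc (P j k) (P j (k + 1)), G j τ := hdec.symm
      _ ≤ ∑ k ∈ Finset.range (n j),
            (ENNReal.ofReal (P j (k + 1) - P j k) * R (P j k) (w j k)
              + ENNReal.ofReal e * ∫⁻ τ in Ioc (P j k) (P j (k + 1)), ψ (f' τ)) :=
          Finset.sum_le_sum (fun k hk => hpiece k (Finset.mem_range.mp hk))
      _ = (∑ k ∈ Finset.range (n j),
            ENNReal.ofReal (P j (k + 1) - P j k) * R (P j k) (w j k))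
          + ENNReal.ofReal e
            * ∑ k ∈ Finset.range (n j), ∫⁻ τ in Ioc (P j k) (P j (k + 1)), ψ (f' τ) := by
          rw [Finset.sum_add_distrib, Finset.mul_sum]
      _ = partSum R f (n j) (P j) + ENNReal.ofReal e * ∫⁻ τ in Ioc s t, ψ (f' τ) := by
          rw [← hSrep j, hΦsum]
      _ ≤ partSum R f (n j) (P j) + ENNReal.ofReal e * C :=
          add_le_add_right (mul_le_mul_right hΦC _) _
  -- the mesh premise holds eventually
  have hprem : ∀ e : ℝ, 0 < e → ∀ᶠ j in atTop,
      ∀ k, k < n j → ∀ τ ∈ Ioc (P j k) (P j (k + 1)), σ (τ - P j k) ≤ e := by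
    intro e he
    obtain ⟨δ, hδpos, hδ⟩ := hσsmall e he
    obtain ⟨N, hN⟩ := hmesh δ hδpos
    rw [eventually_atTop]
    refine ⟨N, fun j hj k hk τ hτ => ?_⟩
    have h1 : 0 ≤ τ - P j k := by linarith [hτ.1.le]
    have h2 : τ - P j k ≤ b - a := by
      have h3 := (hPmemab j k hk.le).1
      have h4 : τ ≤ b := le_trans hτ.2 (hPmemab j (k + 1) hk).2
      linarith
    have h5 : τ - P j k < δ := by
      have h6 := hN j hj k hk
      have h7 := hτ.2
      linarith
    exact (hδ _ h1 h2 h5).le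
  -- small multiples of C
  have hsmallmul : ∀ η : ℝ≥0∞, η ≠ 0 → ∃ e : ℝ, 0 < e ∧ ENNReal.ofReal e * C ≤ η := by
    intro η hη
    rcases eq_or_ne C 0 with hC0 | hC0
    · exact ⟨1, one_pos, by rw [hC0, mul_zero]; exact zero_le⟩
    rcases eq_or_ne η ⊤ with hηtop | hηtop
    · exact ⟨1, one_pos, by rw [hηtop]; exact le_top⟩
    have hCr : 0 < C.toReal := ENNReal.toReal_pos hC0 hCfin
    have hηr : 0 < η.toReal := ENNReal.toReal_pos hη hηtop
    refine ⟨η.toReal / 2 / C.toReal, by positivity, ?_⟩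
    have hC' : C = ENNReal.ofReal C.toReal := (ENNReal.ofReal_toReal hCfin).symm
    calc ENNReal.ofReal (η.toReal / 2 / C.toReal) * C
        = ENNReal.ofReal (η.toReal / 2 / C.toReal) * ENNReal.ofReal C.toReal := by rw [← hC']
      _ = ENNReal.ofReal (η.toReal / 2 / C.toReal * C.toReal) := by
          rw [ENNReal.ofReal_mul (by positivity)]
      _ = ENNReal.ofReal (η.toReal / 2) := by
          rw [div_mul_cancel₀ _ hCr.ne']
      _ ≤ ENNReal.ofReal η.toReal := ENNReal.ofReal_le_ofReal (by linarith)
      _ = η := ENNReal.ofReal_toReal hηtop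
  -- Lebesgue differentiation
  have hfind : Integrable ((Icc a b).indicator f') volume :=
    hf'Icc.integrable_indicator measurableSet_Icc
  have hloc : LocallyIntegrable ((Icc a b).indicator f') volume := hfind.locallyIntegrable
  have hLD := IsUnifLocDoublingMeasure.ae_tendsto_average (μ := volume) hloc 1
  have hae : ∀ᵐ τ ∂(volume.restrict (Ioc s t)),
      R τ (f' τ) ≤ liminf (fun j => G j τ) atTop := by
    filter_upwards [ae_restrict_of_ae hLD, ae_restrict_mem measurableSet_Ioc] with τ hLDτ hτ
    have hτab : τ ∈ Icc a b := hIocst hτ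
    have hch : ∀ j, ∃ k, k < n j ∧ τ ∈ Ioc (P j k) (P j (k + 1)) := by
      intro j
      apply mem_Ioc_partition (P j) (n j) (hPlt j)
      rw [hP0 j, hPn j]
      exact hτ
    choose κ hκ1 hκ2 using hch
    set wc : ℕ → ℝ := fun j => (P j (κ j) + P j (κ j + 1)) / 2 with hwc
    set dl : ℕ → ℝ := fun j => (P j (κ j + 1) - P j (κ j)) / 2 with hdl
    have hdlpos : ∀ j, 0 < dl j := by
      intro j
      have := hPlt j (κ j) (hκ1 j)
      rw [hdl]
      simp only
      linarith
    have hwcsub : ∀ j, wc j - dl j = P j (κ j) := by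
      intro j; rw [hwc, hdl]; ring
    have hwcadd : ∀ j, wc j + dl j = P j (κ j + 1) := by
      intro j; rw [hwc, hdl]; ring
    have hδlim : Tendsto dl atTop (𝓝[>] 0) := by
      rw [tendsto_nhdsWithin_iff]
      constructor
      · rw [Metric.tendsto_atTop]
        intro ε hε
        obtain ⟨N, hN⟩ := hmesh ε hε
        refine ⟨N, fun j hj => ?_⟩
        rw [Real.dist_eq, sub_zero, abs_of_pos (hdlpos j)]
        have := hN j hj (κ j) (hκ1 j)
        rw [hdl]
        simp only
        linarith
      · exact Eventually.of_forall (fun j => hdlpos j)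
    have hballmem : ∀ j, τ ∈ Metric.closedBall (wc j) (1 * dl j) := by
      intro j
      rw [one_mul, Real.closedBall_eq_Icc, hwcsub, hwcadd]
      exact ⟨(hκ2 j).1.le, (hκ2 j).2⟩
    have htendavg := hLDτ wc dl hδlim (Eventually.of_forall hballmem)
    have havg : ∀ j, (⨍ y in Metric.closedBall (wc j) (dl j),
        (Icc a b).indicator f' y ∂volume) = w j (κ j) := by
      intro j
      rw [Real.closedBall_eq_Icc, hwcsub, hwcadd, setAverage_eq, integral_Icc_eq_integral_Ioc,
        setIntegral_congr_fun measurableSet_Ioc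
          (fun x hx => indicator_of_mem (hIocst (hIk_sub j (κ j) (hκ1 j) hx)) f'),
        measureReal_def, Real.volume_Icc,
        ENNReal.toReal_ofReal (by linarith [hPlt j (κ j) (hκ1 j)])]
    have htendw : Tendsto (fun j => w j (κ j)) atTop (𝓝 (f' τ)) := by
      have heq : (fun j => ⨍ y in Metric.closedBall (wc j) (dl j),
          (Icc a b).indicator f' y ∂volume) = fun j => w j (κ j) := funext havg
      rw [heq] at htendavg
      have hτeq : (Icc a b).indicator f' τ = f' τ := indicator_of_mem hτab f'
      rw [hτeq] at htendavg
      exact htendavg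
    refine (Filter.le_liminf_iff (by isBoundedDefault) (by isBoundedDefault)).mpr ?_
    intro y hy
    have hlsc' := hRlsc τ hτab (f' τ) y hy
    have hev := htendw.eventually hlsc'
    filter_upwards [hev] with j hj
    rw [hGpiece j (κ j) (hκ1 j) τ (hκ2 j), hclampeq τ hτab]
    exact hj
  -- final assembly
  have hliminfS : V ≤ liminf (fun j => partSum R f (n j) (P j)) atTop := by
    apply ENNReal.le_of_forall_pos_le_add
    intro ε hε _hlim
    obtain ⟨e, hepos, hemul⟩ := hsmallmul (ε : ℝ≥0∞) (by exact_mod_cast hε.ne')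
    have hev := hprem e hepos
    have hGle : ∀ᶠ j in atTop, (∫⁻ τ in Ioc s t, G j τ)
        ≤ partSum R f (n j) (P j) + ENNReal.ofReal e * C :=
      hev.mono (fun j hj => hlo e hepos.le j hj)
    have hfatou : V ≤ liminf (fun j => ∫⁻ τ in Ioc s t, G j τ) atTop := by
      calc V = ∫⁻ τ in Ioc s t, R τ (f' τ) := hVIoc.symm
        _ ≤ ∫⁻ τ in Ioc s t, liminf (fun j => G j τ) atTop := lintegral_mono_ae hae
        _ ≤ liminf (fun j => ∫⁻ τ in Ioc s t, G j τ) atTop :=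
            lintegral_liminf_le (fun j => hGmeas j)
    have h1 : liminf (fun j => ∫⁻ τ in Ioc s t, G j τ) atTop
        ≤ liminf (fun j => partSum R f (n j) (P j) + ENNReal.ofReal e * C) atTop :=
      liminf_le_liminf hGle
    have h2 := liminf_add_const_le (fun j => partSum R f (n j) (P j)) (ENNReal.ofReal e * C)
    calc V ≤ liminf (fun j => ∫⁻ τ in Ioc s t, G j τ) atTop := hfatou
      _ ≤ liminf (fun j => partSum R f (n j) (P j) + ENNReal.ofReal e * C) atTop := h1
      _ ≤ liminf (fun j => partSum R f (n j) (P j)) atTop + ENNReal.ofReal e * C := h2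
      _ ≤ liminf (fun j => partSum R f (n j) (P j)) atTop + ε := add_le_add_right hemul _
  have hlimsupS : limsup (fun j => partSum R f (n j) (P j)) atTop ≤ V := by
    apply ENNReal.le_of_forall_pos_le_add
    intro ε hε _hV
    obtain ⟨e, hepos, hemul⟩ := hsmallmul (ε : ℝ≥0∞) (by exact_mod_cast hε.ne')
    have hev := hprem e hepos
    refine limsup_le_of_le (by isBoundedDefault) ?_
    filter_upwards [hev] with j hj
    exact (hup e hepos.le j hj).trans (add_le_add_right hemul _)
  exact tendsto_of_le_liminf_of_limsup_le hliminfS hlimsupS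
end

section
/- Let X be a reflexive Banach space and R:[a,b]×X→[0,∞] a ψ-regular functional. Let {f_j} be a sequence of functions from [a,b] to X such that f_j(t) converges weakly to f(t) for every t∈[a,b]. Then V_R(f;s,t) ≤ liminf_{j→∞} V_R(f_j;s,t) for every a≤s≤t≤b. -/
open MeasureTheory Set Filter ENNReal

/-- Weak lower semicontinuity of a convex lsc functional. -/
lemma my_wlsc {X : Type*} [NormedAddCommGroup X] [NormedSpace ℝ X]
    (F : X → ℝ≥0∞)
    (hconv : ∀ u v : X, ∀ θ : ℝ, θ ∈ Icc (0:ℝ) 1 →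
      F (θ • u + (1 - θ) • v) ≤ ENNReal.ofReal θ * F u + ENNReal.ofReal (1 - θ) * F v)
    (hlsc : LowerSemicontinuous F)
    (g : ℕ → X) (x : X)
    (hg : ∀ ξ : X →L[ℝ] ℝ, Tendsto (fun j => ξ (g j)) atTop (nhds (ξ x))) :
    F x ≤ Filter.liminf (fun j => F (g j)) atTop := by
  by_contra hcon
  push_neg at hcon
  obtain ⟨M, hM1, hM2⟩ := exists_between hcon
  set C : Set X := {y | F y ≤ M} with hC
  have hCconv : Convex ℝ C := by
    intro u hu v hv θ η hθ hη hθη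
    have hη' : η = 1 - θ := by linarith
    subst hη'
    have := hconv u v θ ⟨hθ, by linarith⟩
    calc F (θ • u + (1-θ) • v) ≤ ENNReal.ofReal θ * F u + ENNReal.ofReal (1-θ) * F v := this
      _ ≤ ENNReal.ofReal θ * M + ENNReal.ofReal (1-θ) * M := by
          gcongr
          exacts [hu, hv]
      _ = (ENNReal.ofReal θ + ENNReal.ofReal (1-θ)) * M := by ring
      _ = M := by
          rw [← ENNReal.ofReal_add hθ (by linarith)]
          simp
  have hCclosed : IsClosed C := hlsc.isClosed_preimage M
  have hxC : x ∉ C := by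
    intro h
    exact absurd (lt_of_le_of_lt h hM2) (lt_irrefl _)
  obtain ⟨ξ, u, hu1, hu2⟩ := geometric_hahn_banach_closed_point hCconv hCclosed hxC
  have hfreq : ∃ᶠ j in atTop, F (g j) < M := frequently_lt_of_liminf_lt (by isBoundedDefault) hM1
  have hfreq2 : ∃ᶠ j in atTop, ξ (g j) < u := hfreq.mono (fun j hj => hu1 _ hj.le)
  have hev : ∀ᶠ j in atTop, u < ξ (g j) := (hg ξ).eventually (eventually_gt_nhds hu2)
  obtain ⟨j, h1, h2⟩ := (hfreq2.and_eventually hev).exists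
  exact absurd (h1.trans h2) (lt_irrefl _)


lemma my_le_liminf_add {u v : ℕ → ℝ≥0∞} :
    Filter.liminf u atTop + Filter.liminf v atTop ≤
      Filter.liminf (fun j => u j + v j) atTop := by
  refine (le_liminf_iff).2 fun c hc => ?_
  rcases eq_or_ne (liminf u atTop) 0 with hA | hA
  · have hc' : c < liminf v atTop := by simpa [hA] using hc
    filter_upwards [eventually_lt_of_lt_liminf hc'] with j hj
    exact hj.trans_le le_add_self
  rcases eq_or_ne (liminf v atTop) 0 with hB | hB
  · have hc' : c < liminf u atTop := by simpa [hB] using hc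
    filter_upwards [eventually_lt_of_lt_liminf hc'] with j hj
    exact hj.trans_le le_self_add
  obtain ⟨a', ha', b', hb', hc'⟩ := ENNReal.exists_lt_add_of_lt_add hc hA hB
  filter_upwards [eventually_lt_of_lt_liminf ha', eventually_lt_of_lt_liminf hb'] with j h1 h2
  exact hc'.trans (ENNReal.add_lt_add h1 h2)

/-- superadditivity of liminf over finite sums in ℝ≥0∞ -/
lemma my_liminf_sum (n : ℕ) (u : ℕ → ℕ → ℝ≥0∞) :
    ∑ k ∈ Finset.range n, Filter.liminf (u k) atTop ≤
      Filter.liminf (fun j => ∑ k ∈ Finset.range n, u k j) atTop := by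
  induction n with
  | zero => simp
  | succ m ih =>
    rw [Finset.sum_range_succ]
    calc (∑ k ∈ Finset.range m, liminf (u k) atTop) + liminf (u m) atTop
        ≤ liminf (fun j => ∑ k ∈ Finset.range m, u k j) atTop + liminf (u m) atTop := by
          gcongr
      _ ≤ liminf (fun j => (∑ k ∈ Finset.range m, u k j) + u m j) atTop := my_le_liminf_add
      _ = liminf (fun j => ∑ k ∈ Finset.range (m+1), u k j) atTop := by
          apply Filter.liminf_congr
          filter_upwards with j
          rw [Finset.sum_range_succ]

/-- binary subadditivity from convexity + homogeneity -/
lemma my_subadd {X : Type*} [NormedAddCommGroup X] [NormedSpace ℝ X]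
    (F : X → ℝ≥0∞)
    (hconv : ∀ u v : X, ∀ θ : ℝ, θ ∈ Icc (0:ℝ) 1 →
      F (θ • u + (1 - θ) • v) ≤ ENNReal.ofReal θ * F u + ENNReal.ofReal (1 - θ) * F v)
    (hhom : ∀ l : ℝ, 0 < l → ∀ v : X, F (l • v) = ENNReal.ofReal l * F v)
    (u v : X) : F (u + v) ≤ F u + F v := by
  have h12 : (1/2 : ℝ) ∈ Icc (0:ℝ) 1 := by norm_num
  have key := hconv ((2:ℝ) • u) ((2:ℝ) • v) (1/2) h12
  have huv : (1/2 : ℝ) • ((2:ℝ) • u) + (1 - 1/2 : ℝ) • ((2:ℝ) • v) = u + v := by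
    rw [smul_smul, smul_smul]; norm_num
  rw [huv] at key
  have h2 : ∀ w : X, ENNReal.ofReal (1/2) * F ((2:ℝ) • w) = F w := by
    intro w
    rw [hhom 2 (by norm_num) w, ← mul_assoc, ← ENNReal.ofReal_mul (by norm_num)]
    norm_num
  calc F (u + v) ≤ ENNReal.ofReal (1/2) * F ((2:ℝ)•u) + ENNReal.ofReal (1 - 1/2) * F ((2:ℝ)•v) := key
    _ = F u + F v := by rw [show (1 - 1/2 : ℝ) = 1/2 by norm_num, h2, h2]

lemma my_subadd_sum {X : Type*} [NormedAddCommGroup X] [NormedSpace ℝ X]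
    (F : X → ℝ≥0∞)
    (hconv : ∀ u v : X, ∀ θ : ℝ, θ ∈ Icc (0:ℝ) 1 →
      F (θ • u + (1 - θ) • v) ≤ ENNReal.ofReal θ * F u + ENNReal.ofReal (1 - θ) * F v)
    (hhom : ∀ l : ℝ, 0 < l → ∀ v : X, F (l • v) = ENNReal.ofReal l * F v)
    (h0 : F 0 = 0)
    (n : ℕ) (v : ℕ → X) : F (∑ i ∈ Finset.range n, v i) ≤ ∑ i ∈ Finset.range n, F (v i) := by
  induction n with
  | zero => simp [h0]
  | succ m ih =>
    rw [Finset.sum_range_succ, Finset.sum_range_succ]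
    exact le_trans (my_subadd F hconv hhom _ _) (by gcongr)

lemma my_sum_range_mul {M : Type*} [AddCommMonoid M] (F : ℕ → M) (a b : ℕ) :
    ∑ j ∈ Finset.range (a * b), F j = ∑ k ∈ Finset.range a, ∑ i ∈ Finset.range b, F (k * b + i) := by
  induction a with
  | zero => simp
  | succ m ih =>
    rw [Nat.succ_mul, Finset.sum_range_add, ih, Finset.sum_range_succ]

theorem stmt9
    {X : Type*} [NormedAddCommGroup X] [NormedSpace ℝ X] [CompleteSpace X]
    (hrefl : Function.Surjective (NormedSpace.inclusionInDoubleDual ℝ X))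
    (a b : ℝ) (hab : a ≤ b)
    (ψ : X → ℝ≥0∞) (c : ℝ) (hc : 0 < c)
    (hψ0 : ψ 0 = 0)
    (hψconv : ∀ u v : X, ∀ θ : ℝ, θ ∈ Icc (0:ℝ) 1 →
      ψ (θ • u + (1 - θ) • v) ≤ ENNReal.ofReal θ * ψ u + ENNReal.ofReal (1 - θ) * ψ v)
    (hψhom : ∀ l : ℝ, 0 < l → ∀ v : X, ψ (l • v) = ENNReal.ofReal l * ψ v)
    (hψlsc : LowerSemicontinuous ψ)
    (hψcoer : ∀ v : X, ENNReal.ofReal (c * ‖v‖) ≤ ψ v)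
    (R : ℝ → X → ℝ≥0∞) (αl αu : ℝ) (hαl : 0 < αl) (hαlu : αl ≤ αu)
    (hRconv : ∀ t ∈ Icc a b, ∀ u v : X, ∀ θ : ℝ, θ ∈ Icc (0:ℝ) 1 →
      R t (θ • u + (1 - θ) • v) ≤ ENNReal.ofReal θ * R t u + ENNReal.ofReal (1 - θ) * R t v)
    (hRhom : ∀ t ∈ Icc a b, ∀ l : ℝ, 0 < l → ∀ v : X, R t (l • v) = ENNReal.ofReal l * R t v)
    (hRlsc : ∀ t ∈ Icc a b, LowerSemicontinuous (R t))
    (hR0 : ∀ t ∈ Icc a b, R t 0 = 0)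
    (hRlow : ∀ t ∈ Icc a b, ∀ v : X, ENNReal.ofReal αl * ψ v ≤ R t v)
    (hRup : ∀ t ∈ Icc a b, ∀ v : X, R t v ≤ ENNReal.ofReal αu * ψ v)
    (σ : ℝ → ℝ) (hσcont : ContinuousOn σ (Icc 0 (b - a)))
    (hσmono : MonotoneOn σ (Icc 0 (b - a)))
    (hσ0 : σ 0 = 0) (hσnonneg : ∀ s : ℝ, 0 ≤ σ s)
    (hRtime : ∀ s t : ℝ, a ≤ s → s ≤ t → t ≤ b → ∀ v : X, ψ v ≠ ⊤ →
      R t v ≤ R s v + ψ v * ENNReal.ofReal (σ (t - s)) ∧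
        R s v ≤ R t v + ψ v * ENNReal.ofReal (σ (t - s)))
    (fj : ℕ → ℝ → X) (f : ℝ → X)
    (hweak : ∀ t ∈ Icc a b, ∀ ξ : StrongDual ℝ X,
      Tendsto (fun j => ξ (fj j t)) atTop (nhds (ξ (f t))))
    (s t : ℝ) (hs : a ≤ s) (hst : s ≤ t) (htb : t ≤ b)
    (V : ℝ≥0∞) (Vj : ℕ → ℝ≥0∞)
    (hV : RVarEq R f s t V) (hVj : ∀ j, RVarEq R (fj j) s t (Vj j)) :
    V ≤ Filter.liminf Vj atTop := by
  rcases eq_or_lt_of_le hst with heq | hlt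
  · -- degenerate case s = t
    have hfs : IsFineSeq s t (fun _ => 0) (fun _ _ => s) := by
      refine ⟨fun j => rfl, fun j => heq, fun j k hk => absurd hk (Nat.not_lt_zero k),
        fun ε hε => ⟨0, fun j _ k hk => absurd hk (Nat.not_lt_zero k)⟩⟩
    have h0 := hV _ _ hfs
    have hV0 : V = 0 := by
      have h1 : Tendsto (fun _ : ℕ => (0:ℝ≥0∞)) atTop (nhds V) := by
        simpa [partSum] using h0
      exact (tendsto_nhds_unique h1 tendsto_const_nhds)
    simp [hV0]
  -- main case s < t
  set T : ℝ := t - s with hT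
  have hTpos : 0 < T := by rw [hT]; linarith
  have hTba : T ≤ b - a := by rw [hT]; linarith
  -- generic uniform fine sequence
  have hfineN : ∀ (nn : ℕ → ℕ), (∀ m, 0 < nn m) →
      Tendsto (fun m => (nn m : ℝ)) atTop atTop →
      IsFineSeq s t nn (fun m k => s + k * (T / (nn m : ℝ))) := by
    intro nn hpos hlim
    refine ⟨fun m => by simp, fun m => ?_, fun m k _ => ?_, fun ε hε => ?_⟩
    · have h0 : (nn m : ℝ) ≠ 0 := (Nat.cast_pos.mpr (hpos m)).ne'
      field_simp
      rw [hT]; ring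
    · have h : 0 < T / (nn m : ℝ) := div_pos hTpos (Nat.cast_pos.mpr (hpos m))
      have hk : (k:ℝ) < (k+1 : ℕ) := by push_cast; linarith
      have := mul_lt_mul_of_pos_right hk h
      linarith
    · have hev := hlim.eventually (eventually_gt_atTop (T / ε))
      rw [eventually_atTop] at hev
      obtain ⟨N, hN⟩ := hev
      refine ⟨N, fun m hm k _ => ?_⟩
      have h1 : T / ε < (nn m : ℝ) := hN m hm
      have h2 : (0:ℝ) < nn m := Nat.cast_pos.mpr (hpos m)
      have h3 : T / (nn m : ℝ) < ε := by
        rw [div_lt_iff₀ h2]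
        rw [div_lt_iff₀ hε] at h1
        linarith [mul_comm ε (nn m : ℝ)]
      have hcalc : (s + ((k+1:ℕ):ℝ) * (T / nn m)) - (s + (k:ℝ) * (T / nn m))
          = T / nn m := by push_cast; ring
      rw [hcalc]; exact h3
  -- membership of uniform partition points
  have hmemN : ∀ (N : ℕ), 0 < N → ∀ k : ℕ, k ≤ N → s + k * (T / (N:ℝ)) ∈ Icc s t := by
    intro N hN k hk
    have hNpos : (0:ℝ) < N := Nat.cast_pos.mpr hN
    have hdiv : 0 < T / (N:ℝ) := div_pos hTpos hNpos
    constructor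
    · nlinarith [mul_nonneg (Nat.cast_nonneg k : (0:ℝ) ≤ k) hdiv.le]
    · have h1 : (k:ℝ) * (T / N) ≤ (N:ℝ) * (T / N) :=
        mul_le_mul_of_nonneg_right (Nat.cast_le.mpr hk) hdiv.le
      have h2 : (N:ℝ) * (T / N) = T := by field_simp
      rw [hT] at h1 h2 ⊢
      nlinarith
  have hsub : Icc s t ⊆ Icc a b := Icc_subset_Icc hs htb
  -- the error factor
  set E : ℕ → ℝ≥0∞ :=
    fun m => ENNReal.ofReal (σ (T / ((m+1:ℕ):ℝ))) * (ENNReal.ofReal αl)⁻¹ with hE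
  have hαl0 : ENNReal.ofReal αl ≠ 0 := by
    simp [ENNReal.ofReal_eq_zero, not_le, hαl]
  have hαltop : ENNReal.ofReal αl ≠ ⊤ := ENNReal.ofReal_ne_top
  have hEtop : ∀ m, E m ≠ ⊤ :=
    fun m => ENNReal.mul_ne_top ENNReal.ofReal_ne_top (ENNReal.inv_ne_top.mpr hαl0)
  have h1Etop : ∀ m, (1 + E m) ≠ ⊤ := fun m => ENNReal.add_ne_top.mpr ⟨one_ne_top, hEtop m⟩
  have h1E0 : ∀ m, (1 + E m) ≠ 0 := fun m => by simp
  -- Lemma A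
  have lemA : ∀ (g : ℝ → X) (Vg : ℝ≥0∞), RVarEq R g s t Vg → ∀ m : ℕ,
      partSum R g (m+1) (fun k => s + k * (T / ((m+1:ℕ):ℝ))) ≤ (1 + E m) * Vg := by
    intro g Vg hg m
    set P : ℕ → ℝ := fun k => s + k * (T / ((m+1:ℕ):ℝ)) with hPdef
    set Q : ℕ → ℕ → ℝ := fun r i => s + i * (T / (((m+1)*(r+1):ℕ):ℝ)) with hQdef
    have hPQ : ∀ r k : ℕ, P k = Q r (k*(r+1)) := by
      intro r k
      simp only [hPdef, hQdef]
      have h1 : ((m:ℝ)+1) ≠ 0 := by positivity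
      have h2 : ((r:ℝ)+1) ≠ 0 := by positivity
      push_cast
      field_simp
    have hQmono : ∀ r i j : ℕ, i ≤ j → Q r i ≤ Q r j := by
      intro r i j hij
      simp only [hQdef]
      have hnn : (0:ℝ) ≤ T / (((m+1)*(r+1):ℕ):ℝ) := by positivity
      nlinarith [mul_le_mul_of_nonneg_right (Nat.cast_le.mpr hij : (i:ℝ) ≤ j) hnn]
    have hQmem : ∀ r i : ℕ, i ≤ (m+1)*(r+1) → Q r i ∈ Icc s t := by
      intro r i hi
      exact hmemN _ (by positivity) i hi
    have key : ∀ r : ℕ, partSum R g (m+1) P ≤ (1 + E m) * partSum R g ((m+1)*(r+1)) (Q r) := by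
      intro r
      have hidx : ∀ k i : ℕ, k < m+1 → i < r+1 → k*(r+1)+i ≤ (m+1)*(r+1) := by
        intro k i hk hi
        calc k*(r+1)+i ≤ m*(r+1)+r :=
              Nat.add_le_add (Nat.mul_le_mul_right _ (Nat.lt_succ_iff.mp hk))
                (Nat.lt_succ_iff.mp hi)
          _ ≤ (m+1)*(r+1) := by rw [Nat.succ_mul]; omega
      have hterm : ∀ k i : ℕ, k < m+1 → i < r+1 →
          R (P k) (g (Q r (k*(r+1)+i+1)) - g (Q r (k*(r+1)+i))) ≤
            (1 + E m) * R (Q r (k*(r+1)+i)) (g (Q r (k*(r+1)+i+1)) - g (Q r (k*(r+1)+i))) := by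
        intro k i hk hi
        set t0 := P k with ht0
        set t1 := Q r (k*(r+1)+i) with ht1
        set v := g (Q r (k*(r+1)+i+1)) - g (Q r (k*(r+1)+i)) with hv
        have hidx1 : k*(r+1)+i ≤ (m+1)*(r+1) := hidx k i hk hi
        have ht1mem : t1 ∈ Icc s t := hQmem r _ hidx1
        have ht0mem : t0 ∈ Icc s t := by
          rw [ht0, hPQ r k]
          exact hQmem r _ (le_trans (Nat.le_add_right _ i) hidx1)
        have ht01 : t0 ≤ t1 := by
          rw [ht0, hPQ r k]
          exact hQmono r _ _ (Nat.le_add_right _ i)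
        have hcle : T / ((m+1:ℕ):ℝ) ≤ b - a := by
          refine le_trans ?_ hTba
          apply div_le_self hTpos.le
          push_cast
          linarith [Nat.cast_nonneg (α := ℝ) m]
        have hgap : t1 - t0 ≤ T / ((m+1:ℕ):ℝ) := by
          have e1 : t1 - t0 = (i:ℝ) * (T / (((m+1)*(r+1):ℕ):ℝ)) := by
            rw [ht1, ht0, hPQ r k]
            simp only [hQdef]
            push_cast
            ring
          have hmne : ((m:ℝ)+1) ≠ 0 := by positivity
          have hrne : ((r:ℝ)+1) ≠ 0 := by positivity
          have e2 : ((r:ℝ)+1) * (T / (((m:ℝ)+1)*((r:ℝ)+1))) = T/((m:ℝ)+1) := by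
            field_simp
          have hile : (i:ℝ) ≤ (r:ℝ)+1 := by
            have h' : (i:ℝ) ≤ (r:ℝ) := Nat.cast_le.mpr (Nat.lt_succ_iff.mp hi)
            linarith
          rw [e1]
          push_cast
          calc (i:ℝ) * (T / (((m:ℝ)+1)*((r:ℝ)+1)))
              ≤ ((r:ℝ)+1) * (T / (((m:ℝ)+1)*((r:ℝ)+1))) := by
                apply mul_le_mul_of_nonneg_right hile
                positivity
            _ = T/((m:ℝ)+1) := e2
        have hσb : σ (t1 - t0) ≤ σ (T / ((m+1:ℕ):ℝ)) := by
          have hgap0 : 0 ≤ t1 - t0 := by linarith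
          have hTm0 : (0:ℝ) ≤ T / ((m+1:ℕ):ℝ) := by positivity
          exact hσmono ⟨hgap0, le_trans hgap hcle⟩ ⟨hTm0, hcle⟩ hgap
        by_cases hψv : ψ v = ⊤
        · have htop : R t1 v = ⊤ := by
            have hl := hRlow t1 (hsub ht1mem) v
            rw [hψv, ENNReal.mul_top hαl0] at hl
            exact top_le_iff.mp hl
          rw [htop, ENNReal.mul_top (h1E0 m)]
          exact le_top
        · obtain ⟨-, h2⟩ := hRtime t0 t1 (hsub ht0mem).1 ht01 (hsub ht1mem).2 v hψv
          have hψle : ψ v ≤ (ENNReal.ofReal αl)⁻¹ * R t1 v := by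
            calc ψ v = (ENNReal.ofReal αl)⁻¹ * (ENNReal.ofReal αl * ψ v) := by
                  rw [← mul_assoc, ENNReal.inv_mul_cancel hαl0 hαltop, one_mul]
              _ ≤ _ := mul_le_mul_right (hRlow t1 (hsub ht1mem) v) _
          calc R t0 v ≤ R t1 v + ψ v * ENNReal.ofReal (σ (t1 - t0)) := h2
            _ ≤ R t1 v + ((ENNReal.ofReal αl)⁻¹ * R t1 v) *
                  ENNReal.ofReal (σ (T / ((m+1:ℕ):ℝ))) := by
                gcongr
            _ = (1 + E m) * R t1 v := by rw [hE]; ring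
      have htel : ∀ k : ℕ,
          g (P (k+1)) - g (P k) =
            ∑ i ∈ Finset.range (r+1), (g (Q r (k*(r+1)+i+1)) - g (Q r (k*(r+1)+i))) := by
        intro k
        have e1 : P (k+1) = Q r (k*(r+1)+(r+1)) := by
          rw [show k*(r+1)+(r+1) = (k+1)*(r+1) from by ring, ← hPQ]
        have e2 : P k = Q r (k*(r+1)+0) := by
          rw [Nat.add_zero, ← hPQ]
        rw [e1, e2, ← Finset.sum_range_sub (fun i => g (Q r (k*(r+1)+i))) (r+1)]
        exact Finset.sum_congr rfl fun i _ => by rw [← Nat.add_assoc]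
      calc partSum R g (m+1) P
          = ∑ k ∈ Finset.range (m+1), R (P k)
              (∑ i ∈ Finset.range (r+1), (g (Q r (k*(r+1)+i+1)) - g (Q r (k*(r+1)+i)))) := by
            simp only [partSum]
            exact Finset.sum_congr rfl (fun k _ => by rw [← htel k])
        _ ≤ ∑ k ∈ Finset.range (m+1), ∑ i ∈ Finset.range (r+1),
              R (P k) (g (Q r (k*(r+1)+i+1)) - g (Q r (k*(r+1)+i))) := by
            apply Finset.sum_le_sum
            intro k hk
            have hkmem : P k ∈ Icc a b := by
              rw [hPQ r k]
              refine hsub (hQmem r _ ?_)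
              have := Finset.mem_range.mp hk
              calc k*(r+1) ≤ k*(r+1)+0 := le_rfl
                _ ≤ (m+1)*(r+1) := hidx k 0 this (by omega)
            exact my_subadd_sum _ (hRconv _ hkmem) (hRhom _ hkmem) (hR0 _ hkmem) (r+1) _
        _ ≤ ∑ k ∈ Finset.range (m+1), ∑ i ∈ Finset.range (r+1),
              (1 + E m) * R (Q r (k*(r+1)+i)) (g (Q r (k*(r+1)+i+1)) - g (Q r (k*(r+1)+i))) := by
            refine Finset.sum_le_sum (fun k hk => Finset.sum_le_sum (fun i hi => ?_))
            exact hterm k i (Finset.mem_range.mp hk) (Finset.mem_range.mp hi)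
        _ = (1 + E m) * partSum R g ((m+1)*(r+1)) (Q r) := by
            simp only [partSum,
              my_sum_range_mul (fun j => R (Q r j) (g (Q r (j+1)) - g (Q r j))) (m+1) (r+1),
              Finset.mul_sum]
    -- pass to the limit along the refined fine sequence
    have htendQ : Tendsto (fun r : ℕ => (((m+1)*(r+1) : ℕ) : ℝ)) atTop atTop := by
      apply tendsto_natCast_atTop_atTop.comp
      apply tendsto_atTop_mono (fun r => ?_) tendsto_id
      calc (r:ℕ) ≤ r+1 := Nat.le_succ r
        _ ≤ (m+1)*(r+1) := Nat.le_mul_of_pos_left _ (by omega)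
    have hfineQ := hfineN (fun r => (m+1)*(r+1)) (fun r => by positivity) htendQ
    have htend := hg _ _ hfineQ
    exact ge_of_tendsto' (ENNReal.Tendsto.const_mul htend (Or.inr (h1Etop m))) key
  -- the main fine sequence
  have htendP : Tendsto (fun m : ℕ => ((m+1 : ℕ) : ℝ)) atTop atTop := by
    apply tendsto_natCast_atTop_atTop.comp
    exact tendsto_atTop_mono (fun m => Nat.le_succ m) tendsto_id
  have hfineP := hfineN (fun m => m+1) (fun m => Nat.succ_pos m) htendP
  -- Lemma B : weak lower semicontinuity of partition sums
  have lemB : ∀ m : ℕ,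
      partSum R f (m+1) (fun k => s + k * (T / ((m+1:ℕ):ℝ))) ≤
        liminf (fun j => partSum R (fj j) (m+1) (fun k => s + k * (T / ((m+1:ℕ):ℝ)))) atTop := by
    intro m
    have hmem : ∀ k : ℕ, k ≤ m+1 → (s + k * (T / ((m+1:ℕ):ℝ))) ∈ Icc a b :=
      fun k hk => hsub (hmemN (m+1) (by omega) k hk)
    simp only [partSum]
    refine le_trans (Finset.sum_le_sum ?_) (my_liminf_sum (m+1) _)
    intro k hk
    have hk1 : k < m+1 := Finset.mem_range.mp hk
    have hmk : (s + k * (T / ((m+1:ℕ):ℝ))) ∈ Icc a b := hmem k hk1.le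
    have hmk1 : (s + (k+1:ℕ) * (T / ((m+1:ℕ):ℝ))) ∈ Icc a b := hmem (k+1) hk1
    apply my_wlsc (R _) (hRconv _ hmk) (hRlsc _ hmk)
    intro ξ
    have h1 := hweak _ hmk1 ξ
    have h2 := hweak _ hmk ξ
    simpa [map_sub] using h1.sub h2
  -- conclusion
  set L := Filter.liminf Vj atTop with hLdef
  rcases eq_or_ne L ⊤ with hL | hL
  · rw [hL]; exact le_top
  have main : ∀ ε δ : ℝ≥0∞, 0 < ε → 0 < δ → V ≤ (1+ε) * (L + δ) := by
    intro ε δ hε hδ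
    have hstep : ∀ m, liminf (fun j => (1 + E m) * Vj j) atTop ≤ (1 + E m) * (L + δ) := by
      intro m
      have hfr : ∃ᶠ j in atTop, Vj j < L + δ :=
        frequently_lt_of_liminf_lt (by isBoundedDefault) (ENNReal.lt_add_right hL hδ.ne')
      exact liminf_le_of_frequently_le' (hfr.mono fun j hj => mul_le_mul_right hj.le _)
    have hEtend : Tendsto E atTop (nhds 0) := by
      have h1 : Tendsto (fun m : ℕ => T / ((m+1:ℕ):ℝ)) atTop (nhds 0) := by
        have := tendsto_const_div_atTop_nhds_zero_nat T
        exact this.comp (tendsto_add_atTop_nat 1)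
      have h2 : Tendsto (fun m : ℕ => σ (T / ((m+1:ℕ):ℝ))) atTop (nhds 0) := by
        have h0mem : (0:ℝ) ∈ Icc 0 (b-a) := ⟨le_refl _, by linarith⟩
        have hcw : ContinuousWithinAt σ (Icc 0 (b-a)) 0 := hσcont 0 h0mem
        have hwithin : Tendsto (fun m : ℕ => T / ((m+1:ℕ):ℝ)) atTop
            (nhdsWithin 0 (Icc 0 (b-a))) := by
          rw [tendsto_nhdsWithin_iff]
          refine ⟨h1, Eventually.of_forall (fun m => ?_)⟩
          constructor
          · positivity
          · refine le_trans ?_ hTba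
            apply div_le_self hTpos.le
            push_cast
            linarith [Nat.cast_nonneg (α := ℝ) m]
        have := hcw.tendsto.comp hwithin
        rwa [hσ0] at this
      have h3 : Tendsto (fun m : ℕ => ENNReal.ofReal (σ (T / ((m+1:ℕ):ℝ)))) atTop (nhds 0) := by
        have := ENNReal.tendsto_ofReal h2
        simpa using this
      have h4 := ENNReal.Tendsto.mul_const h3 (Or.inr (ENNReal.inv_ne_top.mpr hαl0))
      simpa [hE] using h4
    have hevE : ∀ᶠ m in atTop, E m < ε := hEtend.eventually_lt_const hε
    have hev : ∀ᶠ m in atTop,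
        partSum R f (m+1) (fun k => s + k * (T / ((m+1:ℕ):ℝ))) ≤ (1+ε) * (L + δ) := by
      filter_upwards [hevE] with m hEm
      calc partSum R f (m+1) (fun k => s + k * (T / ((m+1:ℕ):ℝ)))
          ≤ liminf (fun j => partSum R (fj j) (m+1) (fun k => s + k * (T / ((m+1:ℕ):ℝ)))) atTop :=
            lemB m
        _ ≤ liminf (fun j => (1 + E m) * Vj j) atTop :=
            liminf_le_liminf (Eventually.of_forall (fun j => lemA (fj j) (Vj j) (hVj j) m))
        _ ≤ (1 + E m) * (L + δ) := hstep m
        _ ≤ (1 + ε) * (L + δ) := mul_le_mul_left (add_le_add_right hEm.le 1) _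
    exact le_of_tendsto (hV _ _ hfineP) hev
  apply ENNReal.le_of_forall_pos_le_add
  intro ε' hε' _
  have hδpos : (0:ℝ≥0∞) < (ε' : ℝ≥0∞) / 2 :=
    ENNReal.div_pos (by exact_mod_cast hε'.ne') (by norm_num)
  set D : ℝ≥0∞ := L + (ε':ℝ≥0∞)/2 + 1 with hD
  have hD0 : D ≠ 0 := by simp [hD]
  have hDtop : D ≠ ⊤ := by
    refine ENNReal.add_ne_top.mpr ⟨ENNReal.add_ne_top.mpr ⟨hL, ?_⟩, one_ne_top⟩
    exact (ENNReal.div_lt_top coe_ne_top (by norm_num)).ne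
  set ε : ℝ≥0∞ := ((ε':ℝ≥0∞)/2) / D with hεdef
  have hεpos : 0 < ε := ENNReal.div_pos hδpos.ne' hDtop
  have hmain := main ε ((ε':ℝ≥0∞)/2) hεpos hδpos
  have hLD : L + (ε':ℝ≥0∞)/2 ≤ D := by rw [hD]; exact le_add_right le_rfl
  calc V ≤ (1+ε) * (L + (ε':ℝ≥0∞)/2) := hmain
    _ = (L + (ε':ℝ≥0∞)/2) + ε * (L + (ε':ℝ≥0∞)/2) := by ring
    _ ≤ (L + (ε':ℝ≥0∞)/2) + ε * D := by gcongr
    _ = (L + (ε':ℝ≥0∞)/2) + (ε':ℝ≥0∞)/2 := by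
        rw [hεdef, ENNReal.div_mul_cancel hD0 hDtop]
    _ = L + (ε':ℝ≥0∞) := by
        rw [add_assoc, ENNReal.add_halves]
end

section
/- Let X be a reflexive Banach space, R a ψ-regular functional on [a,b]×X, and let {f_j} ⊆ BV_R([a,b];X) converge pointwise strongly to f ∈ BV_R([a,b];X). Assume that the variation functions t ↦ V_R(f_j;a,t) are continuous for every j, that t ↦ V_R(f;a,t) is continuous, and that V_R(f_j;a,t) → V_R(f;a,t) for every t∈[a,b]. Then f_j → f uniformly on [a,b]. -/
open MeasureTheory Set Filter ENNReal

lemma isFineSeq_const (s : ℝ) : IsFineSeq s s (fun _ => 0) (fun _ _ => s) := by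
  refine ⟨fun _ => rfl, fun _ => rfl, fun _ k hk => by simp at hk, fun ε hε => ⟨0, fun _ _ k hk => by simp at hk⟩⟩

lemma isFineSeq_uniform {s t : ℝ} (h : s < t) :
    IsFineSeq s t (fun j => j + 1) (fun j k => s + k * ((t - s) / (j + 1))) := by
  have hts : 0 < t - s := sub_pos.2 h
  refine ⟨fun j => by simp, fun j => ?_, fun j k _ => ?_, fun ε hε => ?_⟩
  · have hj : ((j:ℝ) + 1) ≠ 0 := by positivity
    push_cast
    field_simp
    ring
  · have hj : (0:ℝ) < (t - s) / (j + 1) := by positivity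
    have : ((k:ℝ) + 1) * ((t - s) / (j + 1)) = k * ((t - s) / (j + 1)) + (t - s) / (j + 1) := by ring
    push_cast
    nlinarith
  · obtain ⟨N, hN⟩ := exists_nat_gt ((t - s) / ε)
    refine ⟨N, fun j hj k _ => ?_⟩
    have h1 : (t - s) / ε < (j:ℝ) + 1 := by
      have : (N:ℝ) ≤ j := by exact_mod_cast hj
      linarith
    have h2 : (t - s) / ((j:ℝ) + 1) < ε := by
      rw [div_lt_iff₀ (by positivity)]
      rw [div_lt_iff₀ hε] at h1
      nlinarith
    have : ((k:ℝ) + 1) * ((t - s) / (j + 1)) - k * ((t - s) / (j + 1)) = (t - s) / (j + 1) := by ring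
    push_cast
    linarith [this]

lemma exists_fineSeq {s t : ℝ} (h : s ≤ t) : ∃ n P, IsFineSeq s t n P := by
  rcases h.eq_or_lt with rfl | h
  · exact ⟨_, _, isFineSeq_const s⟩
  · exact ⟨_, _, isFineSeq_uniform h⟩

lemma rVarEq_unique {X : Type*} [NormedAddCommGroup X] {R : ℝ → X → ℝ≥0∞} {f : ℝ → X}
    {s t : ℝ} (h : s ≤ t) {V V' : ℝ≥0∞} (hV : RVarEq R f s t V) (hV' : RVarEq R f s t V') :
    V = V' := by
  obtain ⟨n, P, hP⟩ := exists_fineSeq h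
  exact tendsto_nhds_unique (hV n P hP) (hV' n P hP)

section Concat

variable {a s t : ℝ} {nA nB : ℕ → ℕ} {PA PB : ℕ → ℕ → ℝ}

/-- the concatenated partition -/
noncomputable def concatP (nA : ℕ → ℕ) (PA PB : ℕ → ℕ → ℝ) : ℕ → ℕ → ℝ :=
  fun j k => if k < nA j then PA j k else PB j (k - nA j)

lemma concatP_left (hA : IsFineSeq a s nA PA) (hB : IsFineSeq s t nB PB)
    {j k : ℕ} (hk : k ≤ nA j) : concatP nA PA PB j k = PA j k := by
  rcases lt_or_eq_of_le hk with h | rfl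
  · simp [concatP, h]
  · simp [concatP, (hB.1 j), (hA.2.1 j)]

lemma concatP_right (hB : IsFineSeq s t nB PB) {j k : ℕ} :
    concatP nA PA PB j (nA j + k) = PB j k := by
  simp [concatP]

lemma isFineSeq_concat (hA : IsFineSeq a s nA PA) (hB : IsFineSeq s t nB PB)
    (hnB : ∀ j, 0 < nB j) :
    IsFineSeq a t (fun j => nA j + nB j) (concatP nA PA PB) := by
  have hL : ∀ j k, k ≤ nA j → concatP nA PA PB j k = PA j k :=
    fun j k hk => concatP_left hA hB hk
  have hR : ∀ j k, concatP nA PA PB j (nA j + k) = PB j k :=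
    fun j k => concatP_right hB
  refine ⟨fun j => by rw [hL j 0 (Nat.zero_le _)]; exact hA.1 j, fun j => ?_,
    fun j k hk => ?_, fun ε hε => ?_⟩
  · rw [hR j (nB j)]; exact hB.2.1 j
  · rcases lt_or_ge (k + 1) (nA j) with h | h
    · rw [hL j (k+1) h.le, hL j k (by omega)]
      exact hA.2.2.1 j k (by omega)
    · rcases lt_or_ge k (nA j) with h2 | h2
      · have hk1 : k + 1 = nA j := by omega
        rw [hL j k h2.le, hL j (k+1) (by omega)]
        exact hA.2.2.1 j k h2
      · obtain ⟨i, rfl⟩ : ∃ i, k = nA j + i := ⟨k - nA j, by omega⟩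
        have h3 : nA j + i + 1 = nA j + (i + 1) := by omega
        rw [hR j i, h3, hR j (i+1)]
        exact hB.2.2.1 j i (by simp only [] at hk; omega)
  · obtain ⟨NA, hNA⟩ := hA.2.2.2 ε hε
    obtain ⟨NB, hNB⟩ := hB.2.2.2 ε hε
    refine ⟨max NA NB, fun j hj k hk => ?_⟩
    rcases lt_or_ge (k + 1) (nA j) with h | h
    · rw [hL j (k+1) h.le, hL j k (by omega)]
      exact hNA j (le_trans (le_max_left _ _) hj) k (by omega)
    · rcases lt_or_ge k (nA j) with h2 | h2
      · rw [hL j k h2.le, hL j (k+1) (by omega)]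
        exact hNA j (le_trans (le_max_left _ _) hj) k h2
      · obtain ⟨i, rfl⟩ : ∃ i, k = nA j + i := ⟨k - nA j, by omega⟩
        have h3 : nA j + i + 1 = nA j + (i + 1) := by omega
        rw [hR j i, h3, hR j (i+1)]
        exact hNB j (le_trans (le_max_right _ _) hj) i (by simp only [] at hk; omega)

lemma partSum_concat {X : Type*} [NormedAddCommGroup X] (R : ℝ → X → ℝ≥0∞) (f : ℝ → X)
    (hA : IsFineSeq a s nA PA) (hB : IsFineSeq s t nB PB) (j : ℕ) :
    partSum R f (nA j + nB j) (concatP nA PA PB j)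
      = partSum R f (nA j) (PA j) + partSum R f (nB j) (PB j) := by
  unfold partSum
  rw [Finset.sum_range_add]
  congr 1
  · apply Finset.sum_congr rfl
    intro k hk
    rw [Finset.mem_range] at hk
    rw [concatP_left hA hB hk.le, concatP_left hA hB (by omega)]
  · apply Finset.sum_congr rfl
    intro k hk
    have h1 := concatP_right (nA := nA) (PA := PA) hB (j := j) (k := k)
    have h2 := concatP_right (nA := nA) (PA := PA) hB (j := j) (k := k + 1)
    have : nA j + k + 1 = nA j + (k + 1) := by omega
    rw [h1, this, h2]

end Concat

lemma key_lb {X : Type*} [NormedAddCommGroup X] {a b : ℝ} {ψ : X → ℝ≥0∞} {R : ℝ → X → ℝ≥0∞}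
    {c αl : ℝ} (hc : 0 ≤ c) (hαl : 0 ≤ αl)
    (hψcoer : ∀ v : X, ENNReal.ofReal (c * ‖v‖) ≤ ψ v)
    (hRlow : ∀ t ∈ Icc a b, ∀ v : X, ENNReal.ofReal αl * ψ v ≤ R t v)
    {s t : ℝ} (has : a ≤ s) (hst : s ≤ t) (htb : t ≤ b)
    (g : ℝ → X) {Vs Vt : ℝ≥0∞}
    (hVs : RVarEq R g a s Vs) (hVt : RVarEq R g a t Vt) :
    ENNReal.ofReal (αl * (c * ‖g t - g s‖)) + Vs ≤ Vt := by
  rcases hst.eq_or_lt with rfl | hlt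
  · have : Vs = Vt := rVarEq_unique has hVs hVt
    simp [this]
  · obtain ⟨nA, PA, hA⟩ := exists_fineSeq has
    have hB := isFineSeq_uniform hlt
    set PB : ℕ → ℕ → ℝ := fun j k => s + k * ((t - s) / (j + 1)) with hPBdef
    have hcat := isFineSeq_concat hA hB (fun j => Nat.succ_pos j)
    have htend := hVt _ _ hcat
    have htend' : Tendsto (fun j => partSum R g (nA j) (PA j) + partSum R g (j + 1) (PB j))
        atTop (nhds Vt) := by
      apply htend.congr
      intro j
      exact partSum_concat R g hA hB j
    have hAt : Tendsto (fun j => ENNReal.ofReal (αl * (c * ‖g t - g s‖)) + partSum R g (nA j) (PA j))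
        atTop (nhds (ENNReal.ofReal (αl * (c * ‖g t - g s‖)) + Vs)) :=
      Tendsto.add tendsto_const_nhds (hVs _ _ hA)
    refine le_of_tendsto_of_tendsto' hAt htend' fun j => ?_
    rw [add_comm (partSum R g (nA j)  (PA j))]
    refine add_le_add ?_ le_rfl
    -- lower bound on the partial sum over PB j
    have hmem : ∀ k ≤ j + 1, PB j k ∈ Icc a b := by
      intro k hk
      have h1 : (0:ℝ) ≤ (k:ℝ) * ((t - s) / (j + 1)) :=
        mul_nonneg (Nat.cast_nonneg k) (div_nonneg (sub_pos.2 hlt).le (by positivity))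
      have h2 : (k:ℝ) * ((t - s) / (j + 1)) ≤ t - s := by
        have hk' : (k:ℝ) ≤ (j:ℝ) + 1 := by exact_mod_cast hk
        have hpos : (0:ℝ) < (j:ℝ) + 1 := by positivity
        have : ((j:ℝ) + 1) * ((t - s) / (j + 1)) = t - s := by field_simp
        nlinarith [div_nonneg (le_of_lt (sub_pos.2 hlt)) hpos.le]
      constructor
      · simp only [hPBdef]; linarith
      · simp only [hPBdef]; linarith
    have htele : ‖g t - g s‖ ≤ ∑ k ∈ Finset.range (j + 1), ‖g (PB j (k + 1)) - g (PB j k)‖ := by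
      have h0 : PB j 0 = s := hB.1 j
      have hn : PB j (j + 1) = t := hB.2.1 j
      calc ‖g t - g s‖ = ‖∑ k ∈ Finset.range (j + 1), (g (PB j (k + 1)) - g (PB j k))‖ := by
            rw [Finset.sum_range_sub (fun k => g (PB j k)), h0, hn]
        _ ≤ _ := norm_sum_le _ _
    calc ENNReal.ofReal (αl * (c * ‖g t - g s‖))
        = ENNReal.ofReal αl * ENNReal.ofReal (c * ‖g t - g s‖) := by
          rw [ENNReal.ofReal_mul hαl]
      _ ≤ ENNReal.ofReal αl * ENNReal.ofReal (c * ∑ k ∈ Finset.range (j + 1), ‖g (PB j (k + 1)) - g (PB j k)‖) := by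
          have := mul_le_mul_of_nonneg_left htele hc
          gcongr
      _ = ∑ k ∈ Finset.range (j + 1), ENNReal.ofReal αl * ENNReal.ofReal (c * ‖g (PB j (k + 1)) - g (PB j k)‖) := by
          have hms : (c * ∑ k ∈ Finset.range (j + 1), ‖g (PB j (k + 1)) - g (PB j k)‖)
              = ∑ k ∈ Finset.range (j + 1), c * ‖g (PB j (k + 1)) - g (PB j k)‖ := by
            rw [Finset.mul_sum]
          rw [hms, ENNReal.ofReal_sum_of_nonneg
            (fun k _ => mul_nonneg hc (norm_nonneg _)), Finset.mul_sum]
      _ ≤ partSum R g (j + 1) (PB j) := by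
          unfold partSum
          refine Finset.sum_le_sum fun k hk => ?_
          rw [Finset.mem_range] at hk
          calc ENNReal.ofReal αl * ENNReal.ofReal (c * ‖g (PB j (k + 1)) - g (PB j k)‖)
              ≤ ENNReal.ofReal αl * ψ (g (PB j (k + 1)) - g (PB j k)) := by
                gcongr; exact hψcoer _
            _ ≤ R (PB j k) (g (PB j (k + 1)) - g (PB j k)) :=
                hRlow _ (hmem k (by omega)) _

set_option maxHeartbeats 1000000 in
theorem stmt10
    {X : Type*} [NormedAddCommGroup X] [NormedSpace ℝ X] [CompleteSpace X]
    (hrefl : Function.Surjective (NormedSpace.inclusionInDoubleDual ℝ X))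
    (a b : ℝ) (hab : a ≤ b)
    (ψ : X → ℝ≥0∞) (c : ℝ) (hc : 0 < c)
    (hψ0 : ψ 0 = 0)
    (hψconv : ∀ u v : X, ∀ θ : ℝ, θ ∈ Icc (0:ℝ) 1 →
      ψ (θ • u + (1 - θ) • v) ≤ ENNReal.ofReal θ * ψ u + ENNReal.ofReal (1 - θ) * ψ v)
    (hψhom : ∀ l : ℝ, 0 < l → ∀ v : X, ψ (l • v) = ENNReal.ofReal l * ψ v)
    (hψlsc : LowerSemicontinuous ψ)
    (hψcoer : ∀ v : X, ENNReal.ofReal (c * ‖v‖) ≤ ψ v)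
    (R : ℝ → X → ℝ≥0∞) (αl αu : ℝ) (hαl : 0 < αl) (hαlu : αl ≤ αu)
    (hRconv : ∀ t ∈ Icc a b, ∀ u v : X, ∀ θ : ℝ, θ ∈ Icc (0:ℝ) 1 →
      R t (θ • u + (1 - θ) • v) ≤ ENNReal.ofReal θ * R t u + ENNReal.ofReal (1 - θ) * R t v)
    (hRhom : ∀ t ∈ Icc a b, ∀ l : ℝ, 0 < l → ∀ v : X, R t (l • v) = ENNReal.ofReal l * R t v)
    (hRlsc : ∀ t ∈ Icc a b, LowerSemicontinuous (R t))
    (hR0 : ∀ t ∈ Icc a b, R t 0 = 0)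
    (hRlow : ∀ t ∈ Icc a b, ∀ v : X, ENNReal.ofReal αl * ψ v ≤ R t v)
    (hRup : ∀ t ∈ Icc a b, ∀ v : X, R t v ≤ ENNReal.ofReal αu * ψ v)
    (σ : ℝ → ℝ) (hσcont : ContinuousOn σ (Icc 0 (b - a)))
    (hσmono : MonotoneOn σ (Icc 0 (b - a)))
    (hσ0 : σ 0 = 0) (hσnonneg : ∀ s : ℝ, 0 ≤ σ s)
    (hRtime : ∀ s t : ℝ, a ≤ s → s ≤ t → t ≤ b → ∀ v : X, ψ v ≠ ⊤ →
      R t v ≤ R s v + ψ v * ENNReal.ofReal (σ (t - s)) ∧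
        R s v ≤ R t v + ψ v * ENNReal.ofReal (σ (t - s)))
    (fj : ℕ → ℝ → X) (f : ℝ → X)
    (vj : ℕ → ℝ → ℝ≥0∞) (v : ℝ → ℝ≥0∞)
    (hvj : ∀ j, ∀ t ∈ Icc a b, RVarEq R (fj j) a t (vj j t))
    (hv : ∀ t ∈ Icc a b, RVarEq R f a t (v t))
    (hBVj : ∀ j, vj j b ≠ ⊤) (hBV : v b ≠ ⊤)
    (hcontj : ∀ j, ContinuousOn (vj j) (Icc a b))
    (hcont : ContinuousOn v (Icc a b))
    (hptws : ∀ t ∈ Icc a b, Tendsto (fun j => fj j t) atTop (nhds (f t)))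
    (hvarconv : ∀ t ∈ Icc a b, Tendsto (fun j => vj j t) atTop (nhds (v t))) :
    TendstoUniformlyOn (fun j => fj j) f atTop (Icc a b) := by
  rw [Metric.tendstoUniformlyOn_iff]
  intro ε hε
  have hK : (0:ℝ) < αl * c := mul_pos hαl hc
  -- ℝ≥0∞-valued key estimate
  have hkey : ∀ (g : ℝ → X) (V : ℝ → ℝ≥0∞), (∀ u ∈ Icc a b, RVarEq R g a u (V u)) →
      ∀ s t : ℝ, a ≤ s → s ≤ t → t ≤ b →
        ENNReal.ofReal (αl * (c * ‖g t - g s‖)) + V s ≤ V t := by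
    intro g V hV s t has hst htb
    exact key_lb hc.le hαl.le hψcoer hRlow has hst htb g
      (hV s ⟨has, hst.trans htb⟩) (hV t ⟨has.trans hst, htb⟩)
  have hmono : ∀ (g : ℝ → X) (V : ℝ → ℝ≥0∞), (∀ u ∈ Icc a b, RVarEq R g a u (V u)) →
      ∀ s t : ℝ, a ≤ s → s ≤ t → t ≤ b → V s ≤ V t := by
    intro g V hV s t has hst htb
    exact le_trans (self_le_add_left _ _) (hkey g V hV s t has hst htb)
  have hfin : ∀ (g : ℝ → X) (V : ℝ → ℝ≥0∞), (∀ u ∈ Icc a b, RVarEq R g a u (V u)) →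
      V b ≠ ⊤ → ∀ t ∈ Icc a b, V t ≠ ⊤ := by
    intro g V hV hVb t ht
    exact ((hmono g V hV t b ht.1 ht.2 le_rfl).trans_lt (lt_top_iff_ne_top.2 hVb)).ne
  -- real-valued key estimate
  have hkeyR : ∀ (g : ℝ → X) (V : ℝ → ℝ≥0∞), (∀ u ∈ Icc a b, RVarEq R g a u (V u)) →
      V b ≠ ⊤ → ∀ s t : ℝ, a ≤ s → s ≤ t → t ≤ b →
        αl * (c * ‖g t - g s‖) + (V s).toReal ≤ (V t).toReal := by
    intro g V hV hVb s t has hst htb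
    have h1 := hkey g V hV s t has hst htb
    have hfs : V s ≠ ⊤ := hfin g V hV hVb s ⟨has, hst.trans htb⟩
    have hft : V t ≠ ⊤ := hfin g V hV hVb t ⟨has.trans hst, htb⟩
    have h2 := ENNReal.toReal_mono hft h1
    rw [ENNReal.toReal_add ENNReal.ofReal_ne_top hfs, ENNReal.toReal_ofReal (by positivity)] at h2
    exact h2
  set w : ℝ → ℝ := fun t => (v t).toReal with hwdef
  set wj : ℕ → ℝ → ℝ := fun j t => (vj j t).toReal with hwjdef
  -- uniform continuity of w on [a,b]
  have hwcont : ContinuousOn w (Icc a b) :=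
    ENNReal.continuousOn_toReal.comp hcont (fun t ht => hfin f v hv hBV t ht)
  have hucont := isCompact_Icc.uniformContinuousOn_of_continuous hwcont
  rw [Metric.uniformContinuousOn_iff] at hucont
  set η : ℝ := αl * c * ε / 8 with hηdef
  have hηpos : 0 < η := by positivity
  obtain ⟨δ, hδpos, hδ⟩ := hucont η hηpos
  -- partition of [a,b] with mesh < δ
  obtain ⟨m, hm⟩ := exists_nat_gt ((b - a) / δ)
  set M : ℕ := m + 1 with hMdef
  set h : ℝ := (b - a) / M with hhdef
  have hMpos : (0:ℝ) < (M:ℝ) := by positivity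
  have hh0 : 0 ≤ h := div_nonneg (sub_nonneg.2 hab) hMpos.le
  have hhδ : h < δ := by
    rw [hhdef, div_lt_iff₀ hMpos]
    have h1 : (b - a) / δ < (M:ℝ) := by
      have : (m:ℝ) ≤ (M:ℝ) := by exact_mod_cast Nat.le_succ m
      linarith
    rw [div_lt_iff₀ hδpos] at h1
    linarith
  set p : ℕ → ℝ := fun k => a + k * h with hpdef
  have hp0 : p 0 = a := by simp [hpdef]
  have hpM : p M = b := by
    simp only [hpdef, hhdef]
    field_simp
    ring
  have hpmono : ∀ k l : ℕ, k ≤ l → p k ≤ p l := by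
    intro k l hkl
    simp only [hpdef]
    have : (k:ℝ) ≤ (l:ℝ) := by exact_mod_cast hkl
    nlinarith
  have hpmem : ∀ k ≤ M, p k ∈ Icc a b := by
    intro k hk
    constructor
    · rw [← hp0]; exact hpmono 0 k (Nat.zero_le _)
    · rw [← hpM]; exact hpmono k M hk
  have hpsucc : ∀ k : ℕ, p (k + 1) - p k = h := by
    intro k; simp only [hpdef]; push_cast; ring
  -- eventually, good approximation at the finitely many partition points
  have hev : ∀ᶠ j in atTop, ∀ k ∈ Finset.range (M + 1),
      dist (fj j (p k)) (f (p k)) < ε / 4 ∧ |wj j (p k) - w (p k)| < η := by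
    rw [Filter.eventually_all_finset]
    intro k hk
    rw [Finset.mem_range] at hk
    have hkM : k ≤ M := by omega
    have hkmem := hpmem k hkM
    have h1 : ∀ᶠ j in atTop, dist (fj j (p k)) (f (p k)) < ε / 4 :=
      (Metric.tendsto_nhds.1 (hptws _ hkmem)) _ (by positivity)
    have h2 : Tendsto (fun j => wj j (p k)) atTop (nhds (w (p k))) :=
      (ENNReal.tendsto_toReal (hfin f v hv hBV _ hkmem)).comp (hvarconv _ hkmem)
    have h3 : ∀ᶠ j in atTop, |wj j (p k) - w (p k)| < η := by
      have := (Metric.tendsto_nhds.1 h2) _ hηpos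
      simpa [Real.dist_eq] using this
    exact h1.and h3
  filter_upwards [hev] with j hj t ht
  -- locate t in the partition
  obtain ⟨k, hkM, hk1, hk2⟩ : ∃ k, k < M ∧ p k ≤ t ∧ t ≤ p (k + 1) := by
    rcases eq_or_lt_of_le hab with rfl | haltb
    · refine ⟨0, Nat.succ_pos m, ?_, ?_⟩
      · rw [hp0]; exact ht.1
      · have : t = a := le_antisymm ht.2 ht.1
        rw [this]
        have := hpmem 1 (by omega)
        simpa [le_antisymm ht.2 ht.1] using this.1
    · have hhpos : 0 < h := div_pos (sub_pos.2 haltb) hMpos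
      refine ⟨min (M - 1) ⌊(t - a) / h⌋₊, by omega, ?_, ?_⟩
      · simp only [hpdef]
        have h1 : ((min (M - 1) ⌊(t - a) / h⌋₊ : ℕ) : ℝ) ≤ (⌊(t - a) / h⌋₊ : ℝ) := by
          exact_mod_cast Nat.cast_le.2 (min_le_right _ _)
        have h2 : (⌊(t - a) / h⌋₊ : ℝ) ≤ (t - a) / h :=
          Nat.floor_le (div_nonneg (sub_nonneg.2 ht.1) hhpos.le)
        have h3 : ((min (M - 1) ⌊(t - a) / h⌋₊ : ℕ) : ℝ) * h ≤ t - a := by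
          calc ((min (M - 1) ⌊(t - a) / h⌋₊ : ℕ) : ℝ) * h ≤ ((t - a) / h) * h :=
                mul_le_mul_of_nonneg_right (h1.trans h2) hhpos.le
            _ = t - a := div_mul_cancel₀ _ hhpos.ne'
        linarith
      · rcases le_or_gt (⌊(t - a) / h⌋₊) (M - 1) with hcase | hcase
        · rw [min_eq_right hcase]
          simp only [hpdef]
          have h2 : (t - a) / h < (⌊(t - a) / h⌋₊ : ℝ) + 1 := Nat.lt_floor_add_one _
          have := (div_lt_iff₀ hhpos).1 h2
          push_cast
          nlinarith
        · rw [min_eq_left hcase.le]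
          have : (M - 1) + 1 = M := by omega
          rw [this, hpM]
          exact ht.2
  have hkr : k ∈ Finset.range (M + 1) := Finset.mem_range.2 (by omega)
  have hk1r : k + 1 ∈ Finset.range (M + 1) := Finset.mem_range.2 (by omega)
  obtain ⟨hd1, he1⟩ := hj k hkr
  obtain ⟨-, he2⟩ := hj (k + 1) hk1r
  have hpk := hpmem k (by omega)
  have hpk1 := hpmem (k + 1) (by omega)
  -- uniform continuity bound
  have heδ : |w (p (k + 1)) - w (p k)| < η := by
    have := hδ (p (k + 1)) hpk1 (p k) hpk (by
      rw [Real.dist_eq, hpsucc k]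
      rw [abs_of_nonneg hh0]
      exact hhδ)
    simpa [Real.dist_eq] using this
  -- variation bounds
  have hb1 : αl * (c * ‖fj j t - fj j (p k)‖) + wj j (p k) ≤ wj j t :=
    hkeyR (fj j) (vj j) (hvj j) (hBVj j) (p k) t hpk.1 hk1 ht.2
  have hb2 : wj j t ≤ wj j (p (k + 1)) := by
    have := hmono (fj j) (vj j) (hvj j) t (p (k + 1)) ht.1 hk2 hpk1.2
    exact ENNReal.toReal_mono (hfin (fj j) (vj j) (hvj j) (hBVj j) _ hpk1) this
  have hb3 : αl * (c * ‖f t - f (p k)‖) + w (p k) ≤ w t :=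
    hkeyR f v hv hBV (p k) t hpk.1 hk1 ht.2
  have hb4 : w t ≤ w (p (k + 1)) := by
    have := hmono f v hv t (p (k + 1)) ht.1 hk2 hpk1.2
    exact ENNReal.toReal_mono (hfin f v hv hBV _ hpk1) this
  -- assemble
  have habs1 := abs_lt.1 he1
  have habs2 := abs_lt.1 he2
  have habsδ := abs_lt.1 heδ
  have hest1 : ‖fj j t - fj j (p k)‖ ≤ 3 * ε / 8 := by
    have hchain : αl * (c * ‖fj j t - fj j (p k)‖) ≤ 3 * η := by
      have : wj j (p (k + 1)) - wj j (p k) ≤ 3 * η := by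
        have e1 : wj j (p (k + 1)) < w (p (k + 1)) + η := by linarith [habs2.2]
        have e2 : w (p k) - η < wj j (p k) := by linarith [habs1.1]
        linarith [habsδ.2]
      linarith [hb2]
    have h8 : αl * c * ‖fj j t - fj j (p k)‖ ≤ 3 * (αl * c * ε / 8) := by
      rw [hηdef] at hchain; linarith
    nlinarith [norm_nonneg (fj j t - fj j (p k))]
  have hest2 : ‖f t - f (p k)‖ ≤ ε / 8 := by
    have hchain : αl * (c * ‖f t - f (p k)‖) ≤ η := by
      linarith [habsδ.2, habsδ.1, hb4]
    have h8 : αl * c * ‖f t - f (p k)‖ ≤ αl * c * ε / 8 := by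
      rw [hηdef] at hchain; linarith
    nlinarith [norm_nonneg (f t - f (p k))]
  have htotal : dist (f t) (fj j t) ≤ ‖f t - f (p k)‖ + dist (f (p k)) (fj j (p k))
      + ‖fj j (p k) - fj j t‖ := by
    rw [dist_eq_norm, dist_eq_norm]
    calc ‖f t - fj j t‖ = ‖(f t - f (p k)) + (f (p k) - fj j (p k)) + (fj j (p k) - fj j t)‖ := by
          congr 1; abel
      _ ≤ _ := by
          refine le_trans (norm_add_le _ _) ?_
          gcongr
          exact norm_add_le _ _
  have hsymm : ‖fj j (p k) - fj j t‖ = ‖fj j t - fj j (p k)‖ := norm_sub_rev _ _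
  rw [dist_comm (f (p k))] at htotal
  calc dist (f t) (fj j t) ≤ _ := htotal
    _ < ε := by
      rw [hsymm]
      have : dist (fj j (p k)) (f (p k)) < ε / 4 := hd1
      linarith
end

section
/- Let X be a finite-dimensional space, Z a subspace with π:X→Z linear surjective, E(t,x)=E_sh(t,π(x)) with E_sh(t,·) μ-uniformly convex on Z (with respect to |·|_Z) and differentiable, and R(t,·):X→[0,∞] convex, 1-homogeneous, l.s.c., with R(t,0)=0. Define the restricted dissipation R_sh(t,z) := inf{R(t,x) : x∈X, π(x)=z}. Fix t, and suppose x*∈X satisfies E(t,x*) ≤ E(t,x)+R(t,x−x*) for every x∈X. Then the improved stability estimate holds: E(t,x*) + (μ/2)|π(x*)−π(x)|²_Z ≤ E(t,x)+R_sh(t, π(x)−π(x*)) for every x∈X. -/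
open Set ENNReal

theorem stmt13
    {X Z : Type*} [NormedAddCommGroup X] [NormedSpace ℝ X] [FiniteDimensional ℝ X]
    [NormedAddCommGroup Z] [NormedSpace ℝ Z] [FiniteDimensional ℝ Z]
    (π : X →L[ℝ] Z) (hsurj : Function.Surjective π)
    (t : ℝ) (Esh : ℝ → Z → ℝ) (μ : ℝ) (hμ : 0 < μ)
    (hEdiff : Differentiable ℝ (Esh t))
    -- μ-uniform convexity of `Esh (t, ·)`
    (hEuc : ∀ θ ∈ Icc (0:ℝ) 1, ∀ z₁ z₂ : Z,
      Esh t (θ • z₁ + (1 - θ) • z₂)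
        ≤ θ * Esh t z₁ + (1 - θ) * Esh t z₂ - μ / 2 * θ * (1 - θ) * ‖z₁ - z₂‖ ^ 2)
    (R : ℝ → X → ℝ≥0∞)
    (hRconv : ∀ u v : X, ∀ θ : ℝ, θ ∈ Icc (0:ℝ) 1 →
      R t (θ • u + (1 - θ) • v) ≤ ENNReal.ofReal θ * R t u + ENNReal.ofReal (1 - θ) * R t v)
    (hRhom : ∀ l : ℝ, 0 < l → ∀ v : X, R t (l • v) = ENNReal.ofReal l * R t v)
    (hRlsc : LowerSemicontinuous (R t))
    (hR0 : R t 0 = 0)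
    (xstar : X)
    -- global stability of `xstar` at time `t` (with energy `E t x = Esh t (π x)`)
    (hstab : ∀ x : X, ENNReal.ofReal (Esh t (π xstar) - Esh t (π x)) ≤ R t (x - xstar)) :
    -- improved stability, with the restricted dissipation `R_sh(t,z) = inf {R t y : π y = z}`
    ∀ x : X,
      ENNReal.ofReal (Esh t (π xstar) + μ / 2 * ‖π xstar - π x‖ ^ 2 - Esh t (π x))
        ≤ ⨅ (y : X) (_ : π y = π x - π xstar), R t y := by
  intro x
  refine le_iInf fun y => le_iInf fun hy => ?_
  rcases eq_or_ne (R t y) ⊤ with htop | hne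
  · simp [htop]
  set r := (R t y).toReal with hr
  have hr0 : 0 ≤ r := ENNReal.toReal_nonneg
  have hRy : R t y = ENNReal.ofReal r := (ENNReal.ofReal_toReal hne).symm
  set c := Esh t (π xstar) - Esh t (π x) with hc
  set d := ‖π xstar - π x‖ ^ 2 with hd
  have hd0 : 0 ≤ d := sq_nonneg _
  have key : ∀ θ : ℝ, θ ∈ Ioc (0:ℝ) 1 → c + μ/2 * (1-θ) * d ≤ r := by
    intro θ hθ
    obtain ⟨hθ0, hθ1⟩ := hθ
    have hmem : θ ∈ Icc (0:ℝ) 1 := ⟨hθ0.le, hθ1⟩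
    have hπ : π (xstar + θ • y) = θ • π x + (1 - θ) • π xstar := by
      have h' : π y = π x - π xstar := hy
      simp only [map_add, map_smul, h']
      module
    have hstab' := hstab (xstar + θ • y)
    rw [hπ] at hstab'
    have hsub : xstar + θ • y - xstar = θ • y := by abel
    rw [hsub, hRhom θ hθ0] at hstab'
    have hconv := hEuc θ hmem (π x) (π xstar)
    have hA : θ * (c + μ/2 * (1-θ) * d) ≤
        Esh t (π xstar) - Esh t (θ • π x + (1 - θ) • π xstar) := by
      have hnorm : ‖π x - π xstar‖ = ‖π xstar - π x‖ := norm_sub_rev _ _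
      rw [hc, hd, ← hnorm]
      nlinarith [hconv]
    have hle : ENNReal.ofReal (θ * (c + μ/2*(1-θ)*d)) ≤ ENNReal.ofReal (θ * r) := by
      calc ENNReal.ofReal (θ * (c + μ/2*(1-θ)*d))
          ≤ ENNReal.ofReal (Esh t (π xstar) - Esh t (θ • π x + (1 - θ) • π xstar)) :=
            ENNReal.ofReal_le_ofReal hA
        _ ≤ ENNReal.ofReal θ * R t y := hstab'
        _ = ENNReal.ofReal (θ * r) := by rw [hRy, ← ENNReal.ofReal_mul hθ0.le]
    have h2 := (ENNReal.ofReal_le_ofReal_iff (by positivity)).mp hle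
    exact (mul_le_mul_iff_right₀ hθ0).mp h2
  have hfin : c + μ/2 * d ≤ r := by
    have htend : Filter.Tendsto (fun θ : ℝ => c + μ/2 * (1-θ) * d) (nhdsWithin 0 (Ioi 0))
        (nhds (c + μ/2 * (1-0) * d)) := by
      apply Filter.Tendsto.mono_left _ nhdsWithin_le_nhds
      exact (Continuous.tendsto (by fun_prop) 0)
    have hev : ∀ᶠ θ in nhdsWithin (0:ℝ) (Ioi 0), c + μ/2*(1-θ)*d ≤ r := by
      filter_upwards [Ioc_mem_nhdsGT_of_mem (by constructor <;> norm_num : (0:ℝ) ∈ Ico (0:ℝ) 1)]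
        with θ hθ using key θ hθ
    have := le_of_tendsto htend hev
    simpa using this
  rw [hRy]
  apply ENNReal.ofReal_le_ofReal
  have heq : Esh t (π xstar) + μ/2 * ‖π xstar - π x‖^2 - Esh t (π x) = c + μ/2*d := by
    rw [hc, hd]; ring
  linarith [hfin]
end

section
/- Let X be a reflexive Banach space and R a ψ-regular functional on [0,T]×X with the time-modulus σ(t−s) = ∫ₛᵗ ρ(τ)dτ for a nonnegative ρ∈L¹, and lower bound α_*ψ ≤ R(t,·). Then for any f∈BV_R([0,T];X) and 0≤s≤t≤T with ∫ₛᵗ ρ(τ)dτ < α_*, the variation satisfies V_R(f;s,t) ≥ (1 − (1/α_*)∫ₛᵗ ρ(τ)dτ) V_{R(s)}(f;s,t), where V_{R(s)} denotes the variation computed with the time-frozen functional R(s,·). In particular V_R(f;s,t) ≥ (1 − (1/α_*)∫ₛᵗρ dτ) R(s, f(t)−f(s)). -/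
open MeasureTheory Set Filter ENNReal

theorem stmt15
    {X : Type*} [NormedAddCommGroup X] [NormedSpace ℝ X] [CompleteSpace X]
    (hrefl : Function.Surjective (NormedSpace.inclusionInDoubleDual ℝ X))
    (a b : ℝ) (hab : a ≤ b)
    (ψ : X → ℝ≥0∞) (c : ℝ) (hc : 0 < c)
    (hψ0 : ψ 0 = 0)
    (hψconv : ∀ u v : X, ∀ θ : ℝ, θ ∈ Icc (0:ℝ) 1 →
      ψ (θ • u + (1 - θ) • v) ≤ ENNReal.ofReal θ * ψ u + ENNReal.ofReal (1 - θ) * ψ v)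
    (hψhom : ∀ l : ℝ, 0 < l → ∀ v : X, ψ (l • v) = ENNReal.ofReal l * ψ v)
    (hψlsc : LowerSemicontinuous ψ)
    (hψcoer : ∀ v : X, ENNReal.ofReal (c * ‖v‖) ≤ ψ v)
    (R : ℝ → X → ℝ≥0∞) (αl αu : ℝ) (hαl : 0 < αl) (hαlu : αl ≤ αu)
    (hRconv : ∀ t ∈ Icc a b, ∀ u v : X, ∀ θ : ℝ, θ ∈ Icc (0:ℝ) 1 →
      R t (θ • u + (1 - θ) • v) ≤ ENNReal.ofReal θ * R t u + ENNReal.ofReal (1 - θ) * R t v)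
    (hRhom : ∀ t ∈ Icc a b, ∀ l : ℝ, 0 < l → ∀ v : X, R t (l • v) = ENNReal.ofReal l * R t v)
    (hRlsc : ∀ t ∈ Icc a b, LowerSemicontinuous (R t))
    (hR0 : ∀ t ∈ Icc a b, R t 0 = 0)
    (hRlow : ∀ t ∈ Icc a b, ∀ v : X, ENNReal.ofReal αl * ψ v ≤ R t v)
    (hRup : ∀ t ∈ Icc a b, ∀ v : X, R t v ≤ ENNReal.ofReal αu * ψ v)
    (ρ : ℝ → ℝ) (hρnonneg : ∀ τ, 0 ≤ ρ τ)
    (hρint : IntervalIntegrable ρ volume a b)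
    (hRtime : ∀ s t : ℝ, a ≤ s → s ≤ t → t ≤ b → ∀ v : X, ψ v ≠ ⊤ →
      R t v ≤ R s v + ψ v * ENNReal.ofReal (∫ τ in s..t, ρ τ) ∧
        R s v ≤ R t v + ψ v * ENNReal.ofReal (∫ τ in s..t, ρ τ))
    (f : ℝ → X)
    (Vtot : ℝ≥0∞) (hVtot : RVarEq R f a b Vtot) (hBV : Vtot ≠ ⊤)
    (s t : ℝ) (hs : a ≤ s) (hst : s ≤ t) (htb : t ≤ b)
    (hsmall : (∫ τ in s..t, ρ τ) < αl)
    (V Vfr : ℝ≥0∞)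
    (hV : RVarEq R f s t V)
    (hVfr : RVarEq (fun _ => R s) f s t Vfr) :
    ENNReal.ofReal (1 - (1 / αl) * ∫ τ in s..t, ρ τ) * Vfr ≤ V ∧
      ENNReal.ofReal (1 - (1 / αl) * ∫ τ in s..t, ρ τ) * R s (f t - f s) ≤ V := by
  have hsab : s ∈ Icc a b := ⟨hs, hst.trans htb⟩
  set I0 : ℝ := ∫ τ in s..t, ρ τ with hI0def
  have hI0 : 0 ≤ I0 :=
    intervalIntegral.integral_nonneg hst fun τ _ => hρnonneg τ
  set β : ℝ := (1 / αl) * I0 with hβdef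
  have hβ0 : 0 ≤ β := mul_nonneg (by positivity) hI0
  have hβ1 : β < 1 := by
    rw [hβdef]
    rw [div_mul_eq_mul_div, one_mul, div_lt_one hαl]
    exact hsmall
  -- subadditivity of R s
  have hsub : ∀ u v : X, R s (u + v) ≤ R s u + R s v := by
    intro u v
    have h2 : u + v = (2:ℝ) • ((1/2 : ℝ) • u + (1 - (1/2:ℝ)) • v) := by
      rw [smul_add, smul_smul, smul_smul]; norm_num
    calc R s (u + v) = ENNReal.ofReal 2 * R s ((1/2 : ℝ) • u + (1 - (1/2:ℝ)) • v) := by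
          rw [h2, hRhom s hsab 2 two_pos]
      _ ≤ ENNReal.ofReal 2 * (ENNReal.ofReal (1/2) * R s u + ENNReal.ofReal (1 - 1/2) * R s v) :=
          mul_le_mul_right (hRconv s hsab u v (1/2) ⟨by norm_num, by norm_num⟩) _
      _ = R s u + R s v := by
          rw [mul_add, ← mul_assoc, ← mul_assoc, ← ENNReal.ofReal_mul (by norm_num),
            ← ENNReal.ofReal_mul (by norm_num)]
          norm_num
  have hsubsum : ∀ (n : ℕ) (g : ℕ → X), R s (∑ k ∈ Finset.range n, g k)
      ≤ ∑ k ∈ Finset.range n, R s (g k) := by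
    intro n g
    induction n with
    | zero => simp [hR0 s hsab]
    | succ m ih =>
        rw [Finset.sum_range_succ, Finset.sum_range_succ]
        exact le_trans (hsub _ _) (add_le_add_left ih _)
  -- key per-term estimate
  have hkey : ∀ τ : ℝ, s ≤ τ → τ ≤ t → ∀ v : X,
      R s v ≤ ENNReal.ofReal (1 + β) * R τ v := by
    intro τ hsτ hτt v
    have hτab : τ ∈ Icc a b := ⟨hs.trans hsτ, hτt.trans htb⟩
    by_cases hψv : ψ v = ⊤
    · have hτtop : R τ v = ⊤ := by
        have := hRlow τ hτab v
        rw [hψv, ENNReal.mul_top (ENNReal.ofReal_pos.mpr hαl).ne'] at this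
        exact top_le_iff.mp this
      rw [hτtop, ENNReal.mul_top (ENNReal.ofReal_pos.mpr (by linarith : (0:ℝ) < 1 + β)).ne']
      exact le_top
    · have h1 := (hRtime s τ hs hsτ (hτt.trans htb) v hψv).2
      have h2 : (∫ x in s..τ, ρ x) ≤ I0 := by
        refine intervalIntegral.integral_mono_interval le_rfl hsτ hτt ?_ ?_
        · filter_upwards with x using hρnonneg x
        · refine hρint.mono_set ?_
          rw [uIcc_of_le hst, uIcc_of_le hab]
          exact Icc_subset_Icc hs htb
      have h4 : ψ v * ENNReal.ofReal I0 ≤ ENNReal.ofReal β * R τ v := by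
        have hlow := hRlow τ hτab v
        calc ψ v * ENNReal.ofReal I0
            = ENNReal.ofReal β * (ENNReal.ofReal αl * ψ v) := by
              rw [← mul_assoc, ← ENNReal.ofReal_mul hβ0, mul_comm]
              congr 2
              field_simp [hβdef]
              rw [hβdef, one_div, inv_mul_eq_div, div_mul_cancel₀ _ hαl.ne']
          _ ≤ ENNReal.ofReal β * R τ v := mul_le_mul_right hlow _
      calc R s v ≤ R τ v + ψ v * ENNReal.ofReal (∫ x in s..τ, ρ x) := h1
        _ ≤ R τ v + ψ v * ENNReal.ofReal I0 :=
            add_le_add_right (mul_le_mul_right (ENNReal.ofReal_le_ofReal h2) _) _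
        _ ≤ R τ v + ENNReal.ofReal β * R τ v := add_le_add_right h4 _
        _ = ENNReal.ofReal (1 + β) * R τ v := by
            rw [ENNReal.ofReal_add zero_le_one hβ0, add_mul, ENNReal.ofReal_one, one_mul]
  rcases eq_or_lt_of_le hst with heq | hlt
  · -- degenerate case s = t
    subst heq
    have hfine : IsFineSeq s s (fun _ => 0) (fun _ _ => s) :=
      ⟨fun _ => rfl, fun _ => rfl, fun _ k hk => absurd hk (Nat.not_lt_zero k),
        fun ε hε => ⟨0, fun _ _ k hk => absurd hk (Nat.not_lt_zero k)⟩⟩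
    have hV0 : V = 0 := by
      have := hV _ _ hfine
      simp only [partSum, Finset.range_zero, Finset.sum_empty] at this
      exact tendsto_nhds_unique this tendsto_const_nhds
    have hVfr0 : Vfr = 0 := by
      have := hVfr _ _ hfine
      simp only [partSum, Finset.range_zero, Finset.sum_empty] at this
      exact tendsto_nhds_unique this tendsto_const_nhds
    constructor
    · rw [hVfr0, mul_zero]; exact zero_le
    · rw [sub_self, hR0 s hsab, mul_zero]; exact zero_le
  · -- construct uniform fine partitions
    set h : ℕ → ℝ := fun j => (t - s) / (j + 1) with hhdef
    have hhpos : ∀ j : ℕ, 0 < h j := fun j => div_pos (by linarith) (by positivity)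
    set P : ℕ → ℕ → ℝ := fun j k => s + k * h j with hPdef
    have hPle : ∀ j k, k ≤ j + 1 → P j k ≤ t := by
      intro j k hk
      have : (k : ℝ) * h j ≤ ((j:ℝ) + 1) * h j := by
        apply mul_le_mul_of_nonneg_right _ (hhpos j).le
        exact_mod_cast hk
      have hJ : ((j:ℝ) + 1) * h j = t - s := by
        rw [hhdef]; field_simp
      simp only [hPdef]; linarith
    have hPge : ∀ j k, s ≤ P j k := by
      intro j k
      simp only [hPdef]
      nlinarith [hhpos j, Nat.cast_nonneg (α := ℝ) k]
    have hfine : IsFineSeq s t (fun j => j + 1) P := by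
      refine ⟨fun j => by simp [hPdef], fun j => ?_, fun j k _ => ?_, ?_⟩
      · simp only [hPdef]
        push_cast
        rw [hhdef]; field_simp; ring
      · simp only [hPdef]
        push_cast
        nlinarith [hhpos j]
      · intro ε hε
        obtain ⟨N, hN⟩ := exists_nat_gt ((t - s) / ε)
        refine ⟨N, fun j hj k _ => ?_⟩
        have hd : P j (k + 1) - P j k = h j := by
          simp only [hPdef]; push_cast; ring
        rw [hd, hhdef, div_lt_iff₀ (by positivity)]
        have : (t - s) < ε * (N + 1) := by
          rw [div_lt_iff₀ hε] at hN
          nlinarith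
        have hNj : (N : ℝ) ≤ j := by exact_mod_cast hj
        nlinarith
    have hVlim := hV _ _ hfine
    have hVfrlim := hVfr _ _ hfine
    -- frozen sum ≤ (1+β) * sum
    have hcomp : ∀ j, partSum (fun _ => R s) f (j + 1) (P j)
        ≤ ENNReal.ofReal (1 + β) * partSum R f (j + 1) (P j) := by
      intro j
      unfold partSum
      rw [Finset.mul_sum]
      apply Finset.sum_le_sum
      intro k hk
      have hk' : k < j + 1 := Finset.mem_range.mp hk
      exact hkey (P j k) (hPge j k) (hPle j k hk'.le) _
    have hVfrle : Vfr ≤ ENNReal.ofReal (1 + β) * V := by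
      refine le_of_tendsto_of_tendsto' hVfrlim
        (ENNReal.Tendsto.const_mul hVlim (Or.inr ENNReal.ofReal_ne_top)) hcomp
    have hmain : ENNReal.ofReal (1 - β) * Vfr ≤ V := by
      calc ENNReal.ofReal (1 - β) * Vfr
          ≤ ENNReal.ofReal (1 - β) * (ENNReal.ofReal (1 + β) * V) :=
            mul_le_mul_right hVfrle _
        _ = ENNReal.ofReal ((1 - β) * (1 + β)) * V := by
            rw [ENNReal.ofReal_mul (by linarith), mul_assoc]
        _ ≤ 1 * V := mul_le_mul_left (ENNReal.ofReal_le_one.mpr (by nlinarith)) _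
        _ = V := one_mul V
    have hRV : R s (f t - f s) ≤ Vfr := by
      refine ge_of_tendsto' hVfrlim fun j => ?_
      have htel : f t - f s = ∑ k ∈ Finset.range (j + 1), (f (P j (k + 1)) - f (P j k)) := by
        rw [Finset.sum_range_sub (fun k => f (P j k))]
        rw [hfine.2.1 j, hfine.1 j]
      rw [htel]
      exact hsubsum (j + 1) _
    exact ⟨hmain, le_trans (mul_le_mul_right hRV _) hmain⟩
end

section
/- Let X=ℝ, R(v)=|v|, E(t,x)=(1/2)(x−t−1)², and for ε>0 consider the dynamic problem ε²ẍ_ε(t) + ∂|ẋ_ε(t)| + (x_ε(t)−t−1) ∋ 0 with x_ε(0)=0, ẋ_ε(0)=2. Then x_ε(t) = t + ε sin(t/ε) is the unique solution; x_ε converges uniformly on [0,T] to x(t)=t as ε→0⁺, but x_ε does not converge to x in W^{1,1}(0,T), since ∫₀ᵀ |ẋ_ε(τ)−1| dτ = ∫₀ᵀ |cos(τ/ε)| dτ does not tend to 0. -/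
open MeasureTheory Set Filter

/-- The convex subdifferential of the absolute value at `v`. -/
def subdiffAbs (v : ℝ) : Set ℝ := {ξ | ∀ w : ℝ, |v| + ξ * (w - v) ≤ |w|}

/-- `x` (with derivatives `x'`, `x''`) is a solution of the dynamic problem
`ε²ẍ + ∂|ẋ| + (x - t - 1) ∋ 0` on `[0,T]` with `x(0) = 0`, `ẋ(0) = 2`. -/
def IsDynSol (ε T : ℝ) (x x' x'' : ℝ → ℝ) : Prop :=
  IntervalIntegrable x'' volume 0 T ∧
    (∀ t ∈ Set.Icc (0:ℝ) T, x' t = 2 + ∫ τ in (0:ℝ)..t, x'' τ) ∧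
    (∀ t ∈ Set.Icc (0:ℝ) T, x t = ∫ τ in (0:ℝ)..t, x' τ) ∧
    x 0 = 0 ∧ x' 0 = 2 ∧
    ∀ᵐ t ∂(volume.restrict (Set.Icc (0:ℝ) T)),
      ∃ ξ ∈ subdiffAbs (x' t), ε ^ 2 * x'' t + ξ + (x t - t - 1) = 0

lemma cont_sin_div (ε : ℝ) : Continuous fun τ : ℝ => Real.sin (τ / ε) :=
  Real.continuous_sin.comp (continuous_id.div_const ε)

lemma cont_cos_div (ε : ℝ) : Continuous fun τ : ℝ => Real.cos (τ / ε) :=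
  Real.continuous_cos.comp (continuous_id.div_const ε)

lemma int_sin_div (ε t : ℝ) (hε : 0 < ε) :
    (∫ τ in (0:ℝ)..t, Real.sin (τ / ε)) = ε * (1 - Real.cos (t / ε)) := by
  have h := intervalIntegral.inv_mul_integral_comp_div (f := Real.sin)
    (a := 0) (b := t) (c := ε)
  rw [integral_sin, zero_div, Real.cos_zero] at h
  have hε' : ε ≠ 0 := ne_of_gt hε
  rw [← mul_inv_cancel_left₀ hε' (∫ τ in (0:ℝ)..t, Real.sin (τ / ε)), h]

lemma int_cos_div (ε t : ℝ) (hε : 0 < ε) :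
    (∫ τ in (0:ℝ)..t, Real.cos (τ / ε)) = ε * Real.sin (t / ε) := by
  have h := intervalIntegral.inv_mul_integral_comp_div (f := Real.cos)
    (a := 0) (b := t) (c := ε)
  rw [integral_cos, zero_div, Real.sin_zero, sub_zero] at h
  have hε' : ε ≠ 0 := ne_of_gt hε
  rw [← mul_inv_cancel_left₀ hε' (∫ τ in (0:ℝ)..t, Real.cos (τ / ε)), h]

lemma int_cos_sq_div (ε t : ℝ) (hε : 0 < ε) :
    (∫ τ in (0:ℝ)..t, Real.cos (τ / ε) ^ 2)
      = (ε * (Real.cos (t / ε) * Real.sin (t / ε)) + t) / 2 := by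
  have h := intervalIntegral.inv_mul_integral_comp_div (f := fun x => Real.cos x ^ 2)
    (a := 0) (b := t) (c := ε)
  rw [integral_cos_sq, zero_div, Real.sin_zero, Real.cos_zero] at h
  have hε' : ε ≠ 0 := ne_of_gt hε
  rw [← mul_inv_cancel_left₀ hε' (∫ τ in (0:ℝ)..t, Real.cos (τ / ε) ^ 2), h]
  field_simp
  ring

/-- The explicit function solves the dynamic problem. -/
lemma dynsol_explicit (ε T : ℝ) (hε : 0 < ε) :
    IsDynSol ε T (fun t => t + ε * Real.sin (t / ε))
      (fun t => 1 + Real.cos (t / ε))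
      (fun t => -(1 / ε) * Real.sin (t / ε)) := by
  have hε' : ε ≠ 0 := ne_of_gt hε
  refine ⟨(Continuous.intervalIntegrable (by fun_prop) 0 T), ?_, ?_, by simp, by norm_num, ?_⟩
  · intro t _
    rw [intervalIntegral.integral_const_mul, int_sin_div ε t hε]
    field_simp
    ring
  · intro t _
    have h1 : (fun τ => 1 + Real.cos (τ / ε)) =
        (fun τ => (1:ℝ)) + (fun τ => Real.cos (τ / ε)) := rfl
    rw [intervalIntegral.integral_add
      (intervalIntegrable_const) ((cont_cos_div ε).intervalIntegrable 0 t),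
      intervalIntegral.integral_const, int_cos_div ε t hε]
    simp
  · refine ae_of_all _ fun t => ⟨1, ?_, ?_⟩
    · intro w
      have h1 : (0:ℝ) ≤ 1 + Real.cos (t / ε) := by
        nlinarith [Real.neg_one_le_cos (t / ε)]
      rw [abs_of_nonneg h1]
      have := le_abs_self w
      linarith
    · field_simp
      ring

/-- Square of a primitive as a double integral (integration-by-parts identity). -/
lemma sq_primitive (g : ℝ → ℝ) (t : ℝ)
    (hg : IntegrableOn g (Ioc 0 t)) :
    (∫ u in Ioc (0:ℝ) t, g u) ^ 2
      = 2 * ∫ s in Ioc (0:ℝ) t, (∫ u in Ioc (0:ℝ) s, g u) * g s := by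
  have hμ : ∀ s : ℝ, s ∈ Ioc (0:ℝ) t → Iic s ∩ Ioc 0 t = Ioc 0 s := by
    intro s hs
    ext u; simp only [mem_inter_iff, mem_Iic, mem_Ioc]
    constructor
    · rintro ⟨h1, h2, h3⟩; exact ⟨h2, h1⟩
    · rintro ⟨h1, h2⟩; exact ⟨h2, h1, le_trans h2 hs.2⟩
  set F : ℝ → ℝ := fun s => ∫ u in Ioc (0:ℝ) s, g u with hF
  have hgμ : Integrable g (volume.restrict (Ioc (0:ℝ) t)) := hg
  have hS : MeasurableSet {p : ℝ × ℝ | p.2 ≤ p.1} :=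
    measurableSet_le measurable_snd measurable_fst
  have hind : Integrable
      ({p : ℝ × ℝ | p.2 ≤ p.1}.indicator (fun p : ℝ × ℝ => g p.1 * g p.2))
      ((volume.restrict (Ioc (0:ℝ) t)).prod (volume.restrict (Ioc (0:ℝ) t))) :=
    (hgμ.mul_prod hgμ).indicator hS
  have hswap := MeasureTheory.integral_integral_swap
    (f := fun s u => ({p : ℝ × ℝ | p.2 ≤ p.1}.indicator
        (fun p : ℝ × ℝ => g p.1 * g p.2)) (s, u))
    (μ := volume.restrict (Ioc (0:ℝ) t)) (ν := volume.restrict (Ioc (0:ℝ) t)) hind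
  -- integrability of F * g
  have hgIcc : IntegrableOn g (Icc 0 t) := by
    rwa [integrableOn_Icc_iff_integrableOn_Ioc]
  have hFcont : ContinuousOn F (Icc 0 t) := intervalIntegral.continuousOn_primitive hgIcc
  obtain ⟨C, hC⟩ := isCompact_Icc.exists_bound_of_continuousOn hFcont
  have hFmeas : AEStronglyMeasurable F (volume.restrict (Ioc (0:ℝ) t)) :=
    (hFcont.mono Ioc_subset_Icc_self).aestronglyMeasurable measurableSet_Ioc
  have hFbd : ∀ᵐ s ∂(volume.restrict (Ioc (0:ℝ) t)), ‖F s‖ ≤ C :=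
    (ae_restrict_iff' measurableSet_Ioc).2
      (ae_of_all _ fun s hs => hC s (Ioc_subset_Icc_self hs))
  have hFg : Integrable (fun s => F s * g s) (volume.restrict (Ioc (0:ℝ) t)) :=
    hgμ.bdd_mul hFmeas hFbd
  -- compute the unswapped double integral
  have hA : (∫ s in Ioc (0:ℝ) t, (∫ u in Ioc (0:ℝ) t,
        ({p : ℝ × ℝ | p.2 ≤ p.1}.indicator (fun p : ℝ × ℝ => g p.1 * g p.2)) (s, u)))
      = ∫ s in Ioc (0:ℝ) t, F s * g s := by
    apply setIntegral_congr_fun measurableSet_Ioc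
    intro s hs
    have h1 : (fun u => ({p : ℝ × ℝ | p.2 ≤ p.1}.indicator
        (fun p : ℝ × ℝ => g p.1 * g p.2)) (s, u))
        = (Iic s).indicator (fun u => g s * g u) := by
      funext u
      by_cases h : u ≤ s <;> simp [Set.indicator, h]
    show (∫ u in Ioc (0:ℝ) t,
        ({p : ℝ × ℝ | p.2 ≤ p.1}.indicator (fun p : ℝ × ℝ => g p.1 * g p.2)) (s, u))
        = F s * g s
    rw [h1, integral_indicator measurableSet_Iic,
      Measure.restrict_restrict measurableSet_Iic, hμ s hs, integral_const_mul, mul_comm]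
  -- compute the swapped double integral
  have hB : (∫ u in Ioc (0:ℝ) t, (∫ s in Ioc (0:ℝ) t,
        ({p : ℝ × ℝ | p.2 ≤ p.1}.indicator (fun p : ℝ × ℝ => g p.1 * g p.2)) (s, u)))
      = F t * F t - ∫ s in Ioc (0:ℝ) t, F s * g s := by
    have key : ∀ u ∈ Ioc (0:ℝ) t,
        (∫ s in Ioc (0:ℝ) t, ({p : ℝ × ℝ | p.2 ≤ p.1}.indicator
          (fun p : ℝ × ℝ => g p.1 * g p.2)) (s, u))
        = (F t - F u) * g u := by
      intro u hu
      have h1 : (fun s => ({p : ℝ × ℝ | p.2 ≤ p.1}.indicator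
          (fun p : ℝ × ℝ => g p.1 * g p.2)) (s, u))
          = (Ici u).indicator (fun s => g s * g u) := by
        funext s
        by_cases h : u ≤ s <;> simp [Set.indicator, h]
      rw [h1, integral_indicator measurableSet_Ici,
        Measure.restrict_restrict measurableSet_Ici]
      have h2 : Ici u ∩ Ioc 0 t = Icc u t := by
        ext s; simp only [mem_inter_iff, mem_Ici, mem_Ioc, mem_Icc]
        constructor
        · rintro ⟨ha, hb, hc⟩; exact ⟨ha, hc⟩
        · rintro ⟨ha, hb⟩; exact ⟨ha, lt_of_lt_of_le hu.1 ha, hb⟩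
      have h3 : (∫ s in Ioc u t, g s) = F t - F u := by
        have hunion : Ioc (0:ℝ) u ∪ Ioc u t = Ioc 0 t :=
          Ioc_union_Ioc_eq_Ioc hu.1.le hu.2
        have h4 := setIntegral_union (μ := volume) (f := g)
          (s := Ioc (0:ℝ) u) (t := Ioc u t)
          (Set.Ioc_disjoint_Ioc_of_le le_rfl) measurableSet_Ioc
          (hg.mono_set (by rw [← hunion]; exact subset_union_left))
          (hg.mono_set (by rw [← hunion]; exact subset_union_right))
        rw [hunion] at h4
        simp only [hF]
        linarith
      rw [h2, integral_Icc_eq_integral_Ioc, MeasureTheory.integral_mul_const, h3]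
    rw [setIntegral_congr_fun measurableSet_Ioc key]
    have heq : ∀ u, (F t - F u) * g u = F t * g u - F u * g u := fun u => by ring
    simp_rw [heq]
    rw [integral_sub (hgμ.const_mul (F t)) hFg, integral_const_mul]
  rw [hA, hB] at hswap
  nlinarith [hswap]

/-- Uniqueness of the dynamic solution. -/
lemma dynsol_unique (ε T : ℝ) (hε : 0 < ε) (hT : 0 < T)
    (x x' x'' : ℝ → ℝ) (hx : IsDynSol ε T x x' x'') :
    ∀ t ∈ Set.Icc (0:ℝ) T, x t = t + ε * Real.sin (t / ε) := by
  obtain ⟨hw1, hw2, hw3, hw4, hw5, hw6⟩ := dynsol_explicit ε T hε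
  obtain ⟨hx1, hx2, hx3, hx4, hx5, hx6⟩ := hx
  set w : ℝ → ℝ := fun t => t + ε * Real.sin (t / ε) with hw
  set w' : ℝ → ℝ := fun t => 1 + Real.cos (t / ε) with hw'
  set w'' : ℝ → ℝ := fun t => -(1 / ε) * Real.sin (t / ε) with hw''
  set y : ℝ → ℝ := fun s => x s - w s with hy
  set y' : ℝ → ℝ := fun s => x' s - w' s with hy'
  set y'' : ℝ → ℝ := fun s => x'' s - w'' s with hy''
  have hy''int : IntervalIntegrable y'' volume 0 T := hx1.sub hw1
  have hy'eq : ∀ s ∈ Icc (0:ℝ) T, y' s = ∫ τ in (0:ℝ)..s, y'' τ := by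
    intro s hs
    have := intervalIntegral.integral_sub (hx1.mono_set (by
        rw [uIcc_of_le hs.1, uIcc_of_le hT.le]; exact Icc_subset_Icc le_rfl hs.2))
      (hw1.mono_set (by
        rw [uIcc_of_le hs.1, uIcc_of_le hT.le]; exact Icc_subset_Icc le_rfl hs.2))
    simp only [hy', hy'', hx2 s hs, hw2 s hs, this]
    ring
  have hyeq : ∀ s ∈ Icc (0:ℝ) T, y s = ∫ τ in (0:ℝ)..s, y' τ := by
    intro s hs
    have hPcont : ContinuousOn (fun r => 2 + ∫ τ in (0:ℝ)..r, x'' τ) (Icc 0 T) := by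
      have := intervalIntegral.continuousOn_primitive_interval' hx1
        (a := 0) (by rw [uIcc_of_le hT.le]; exact ⟨le_rfl, hT.le⟩)
      rw [uIcc_of_le hT.le] at this
      exact continuousOn_const.add this
    have hx'i : IntervalIntegrable x' volume 0 s := by
      apply ContinuousOn.intervalIntegrable
      rw [uIcc_of_le hs.1]
      exact ((hPcont.mono (Icc_subset_Icc le_rfl hs.2)).congr
        fun r hr => hx2 r ⟨hr.1, le_trans hr.2 hs.2⟩)
    have hw'i : IntervalIntegrable w' volume 0 s :=
      (Continuous.intervalIntegrable (by fun_prop) 0 s)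
    have := intervalIntegral.integral_sub hx'i hw'i
    simp only [hy, hy', hx3 s hs, hw3 s hs, this]
  intro t ht
  obtain ⟨ht0, htT⟩ := ht
  have hsub : Ioc (0:ℝ) t ⊆ Icc 0 T := fun s hs => ⟨hs.1.le, le_trans hs.2 htT⟩
  have hsub' : Icc (0:ℝ) t ⊆ Icc 0 T := Icc_subset_Icc le_rfl htT
  -- y'' is integrable on Ioc 0 t
  have hy''Ioc : IntegrableOn y'' (Ioc 0 t) := by
    have := hy''int.mono_set (by
      rw [uIcc_of_le ht0, uIcc_of_le hT.le]; exact Icc_subset_Icc le_rfl htT)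
    exact (intervalIntegrable_iff_integrableOn_Ioc_of_le ht0).1 this
  have hy''Icc : IntegrableOn y'' (Icc 0 t) := by
    rwa [integrableOn_Icc_iff_integrableOn_Ioc]
  -- y' is the primitive of y''
  have hy'prim : ∀ s ∈ Icc (0:ℝ) t, y' s = ∫ u in Ioc (0:ℝ) s, y'' u := by
    intro s hs
    rw [hy'eq s (hsub' hs), intervalIntegral.integral_of_le hs.1]
  -- y' is integrable / bounded on Icc 0 t
  have hF2cont : ContinuousOn (fun s => ∫ u in Ioc (0:ℝ) s, y'' u) (Icc 0 t) :=
    intervalIntegral.continuousOn_primitive hy''Icc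
  have hy'cont : ContinuousOn y' (Icc 0 t) :=
    hF2cont.congr fun s hs => hy'prim s hs
  have hy'Icc : IntegrableOn y' (Icc 0 t) := hy'cont.integrableOn_Icc
  have hy'Ioc : IntegrableOn y' (Ioc 0 t) := hy'Icc.mono_set Ioc_subset_Icc_self
  -- y is the primitive of y'
  have hyprim : ∀ s ∈ Icc (0:ℝ) t, y s = ∫ u in Ioc (0:ℝ) s, y' u := by
    intro s hs
    rw [hyeq s (hsub' hs), intervalIntegral.integral_of_le hs.1]
  have hG2cont : ContinuousOn (fun s => ∫ u in Ioc (0:ℝ) s, y' u) (Icc 0 t) :=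
    intervalIntegral.continuousOn_primitive hy'Icc
  have hycont : ContinuousOn y (Icc 0 t) :=
    hG2cont.congr fun s hs => hyprim s hs
  -- energy identities from `sq_primitive`
  have E1 : (y' t) ^ 2 = 2 * ∫ s in Ioc (0:ℝ) t, y' s * y'' s := by
    have h := sq_primitive y'' t hy''Ioc
    rw [← hy'prim t ⟨ht0, le_rfl⟩] at h
    rw [h]
    congr 1
    apply setIntegral_congr_fun measurableSet_Ioc
    intro s hs
    show (∫ u in Ioc (0:ℝ) s, y'' u) * y'' s = y' s * y'' s
    rw [← hy'prim s ⟨hs.1.le, hs.2⟩]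
  have E2 : (y t) ^ 2 = 2 * ∫ s in Ioc (0:ℝ) t, y s * y' s := by
    have h := sq_primitive y' t hy'Ioc
    rw [← hyprim t ⟨ht0, le_rfl⟩] at h
    rw [h]
    congr 1
    apply setIntegral_congr_fun measurableSet_Ioc
    intro s hs
    show (∫ u in Ioc (0:ℝ) s, y' u) * y' s = y s * y' s
    rw [← hyprim s ⟨hs.1.le, hs.2⟩]
  -- integrability of the energy integrands
  have hbd : ∀ (f : ℝ → ℝ), ContinuousOn f (Icc 0 t) →
      (∃ C, ∀ᵐ s ∂(volume.restrict (Ioc (0:ℝ) t)), ‖f s‖ ≤ C) ∧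
      AEStronglyMeasurable f (volume.restrict (Ioc (0:ℝ) t)) := by
    intro f hf
    obtain ⟨C, hC⟩ := isCompact_Icc.exists_bound_of_continuousOn hf
    exact ⟨⟨C, (ae_restrict_iff' measurableSet_Ioc).2
        (ae_of_all _ fun s hs => hC s (Ioc_subset_Icc_self hs))⟩,
      (hf.mono Ioc_subset_Icc_self).aestronglyMeasurable measurableSet_Ioc⟩
  obtain ⟨⟨C1, hC1⟩, hm1⟩ := hbd y' hy'cont
  obtain ⟨⟨C2, hC2⟩, hm2⟩ := hbd y hycont
  have I1 : Integrable (fun s => y' s * y'' s) (volume.restrict (Ioc (0:ℝ) t)) :=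
    Integrable.bdd_mul (c := C1) hy''Ioc hm1 hC1
  have I2 : Integrable (fun s => y s * y' s) (volume.restrict (Ioc (0:ℝ) t)) :=
    Integrable.bdd_mul (c := C2) hy'Ioc hm2 hC2
  -- the combined energy identity
  have hE : ε ^ 2 * (y' t) ^ 2 + (y t) ^ 2
      = 2 * ∫ s in Ioc (0:ℝ) t, y' s * (ε ^ 2 * y'' s + y s) := by
    have heq : ∀ s, y' s * (ε ^ 2 * y'' s + y s)
        = ε ^ 2 * (y' s * y'' s) + y s * y' s := fun s => by ring
    simp_rw [heq]
    rw [integral_add (I1.const_mul (ε ^ 2)) I2, integral_const_mul]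
    rw [E1, E2]
    ring
  -- the a.e. sign condition
  have hweq : ∀ s : ℝ, ε ^ 2 * w'' s + 1 + (w s - s - 1) = 0 := by
    intro s
    have hε' : ε ≠ 0 := ne_of_gt hε
    simp only [hw, hw'']
    field_simp
    ring
  have hae : ∀ᵐ s ∂(volume.restrict (Ioc (0:ℝ) t)),
      y' s * (ε ^ 2 * y'' s + y s) ≤ 0 := by
    have hx6' := ae_restrict_of_ae_restrict_of_subset hsub hx6
    filter_upwards [hx6', (ae_restrict_iff' measurableSet_Ioc).2
      (ae_of_all _ fun s hs => hs)] with s hs hs'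
    obtain ⟨ξ, hξ, heq⟩ := hs
    have hw's : (0:ℝ) ≤ w' s := by
      simp only [hw']
      nlinarith [Real.neg_one_le_cos (s / ε)]
    have h1 : |x' s| + ξ * (w' s - x' s) ≤ |w' s| := hξ (w' s)
    rw [abs_of_nonneg hw's] at h1
    have h2 : x' s ≤ |x' s| := le_abs_self _
    -- (x' s - w' s) * (1 - ξ) ≤ 0
    have h3 : (x' s - w' s) * (1 - ξ) ≤ 0 := by nlinarith
    have h4 : ε ^ 2 * y'' s + y s = 1 - ξ := by
      have := hweq s
      simp only [hy, hy', hy''] at *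
      linarith
    rw [h4]
    simpa only [hy'] using h3
  have hint : (∫ s in Ioc (0:ℝ) t, y' s * (ε ^ 2 * y'' s + y s)) ≤ 0 :=
    integral_nonpos_of_ae hae
  have hyt : y t = 0 := by nlinarith [sq_nonneg (y' t), sq_nonneg (y t), sq_nonneg ε]
  have : x t - w t = 0 := hyt
  simp only [hw] at this
  linarith

theorem stmt16 (T : ℝ) (hT : 0 < T) :
    -- `x_ε(t) = t + ε sin(t/ε)` solves the dynamic problem …
    (∀ ε > (0:ℝ),
      IsDynSol ε T (fun t => t + ε * Real.sin (t / ε))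
        (fun t => 1 + Real.cos (t / ε))
        (fun t => -(1 / ε) * Real.sin (t / ε))) ∧
    -- … and it is the unique solution
    (∀ ε > (0:ℝ), ∀ x x' x'' : ℝ → ℝ, IsDynSol ε T x x' x'' →
      ∀ t ∈ Set.Icc (0:ℝ) T, x t = t + ε * Real.sin (t / ε)) ∧
    -- uniform convergence to the quasistatic solution `x(t) = t` as `ε → 0⁺`
    TendstoUniformlyOn (fun (ε : ℝ) (t : ℝ) => t + ε * Real.sin (t / ε))
      (fun t => t) (nhdsWithin 0 (Set.Ioi 0)) (Set.Icc 0 T) ∧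
    -- failure of `W^{1,1}` convergence
    (∀ ε > (0:ℝ),
      (∫ τ in (0:ℝ)..T, |(1 + Real.cos (τ / ε)) - 1|)
        = ∫ τ in (0:ℝ)..T, |Real.cos (τ / ε)|) ∧
    ¬ Tendsto (fun ε : ℝ => ∫ τ in (0:ℝ)..T, |Real.cos (τ / ε)|)
        (nhdsWithin 0 (Set.Ioi 0)) (nhds 0) := by
  refine ⟨fun ε hε => dynsol_explicit ε T hε,
    fun ε hε x x' x'' hx => dynsol_unique ε T hε hT x x' x'' hx, ?_, ?_⟩
  · -- uniform convergence
    rw [Metric.tendstoUniformlyOn_iff]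
    intro δ hδ
    filter_upwards [Ioo_mem_nhdsGT_of_mem (Set.mem_Ico.2 ⟨le_refl 0, hδ⟩)] with ε hε
    intro t _
    have h1 : |ε * Real.sin (t / ε)| ≤ ε := by
      rw [abs_mul, abs_of_pos hε.1]
      nlinarith [Real.abs_sin_le_one (t / ε), hε.1]
    rw [Real.dist_eq]
    have : t - (t + ε * Real.sin (t / ε)) = -(ε * Real.sin (t / ε)) := by ring
    rw [this, abs_neg]
    exact lt_of_le_of_lt h1 hε.2
  constructor
  · -- trivial integrand identity
    intro ε _
    congr 1
    funext τ
    ring_nf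
  · -- non-convergence in W^{1,1}
    intro h
    have hlow : ∀ ε : ℝ, 0 < ε →
        (∫ τ in (0:ℝ)..T, |Real.cos (τ / ε)|) ≥ T / 2 - ε / 2 := by
      intro ε hε
      have hmono : (∫ τ in (0:ℝ)..T, Real.cos (τ / ε) ^ 2)
          ≤ ∫ τ in (0:ℝ)..T, |Real.cos (τ / ε)| := by
        apply intervalIntegral.integral_mono_on hT.le
        · exact ((cont_cos_div ε).pow 2).intervalIntegrable 0 T
        · exact (cont_cos_div ε).abs.intervalIntegrable 0 T
        · intro τ _
          have h1 : |Real.cos (τ / ε)| ≤ 1 := Real.abs_cos_le_one _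
          have h2 : (0:ℝ) ≤ |Real.cos (τ / ε)| := abs_nonneg _
          nlinarith [sq_abs (Real.cos (τ / ε))]
      rw [int_cos_sq_div ε T hε] at hmono
      have hb : -1 ≤ Real.cos (T / ε) * Real.sin (T / ε) := by
        nlinarith [Real.neg_one_le_cos (T / ε), Real.cos_le_one (T / ε),
          Real.neg_one_le_sin (T / ε), Real.sin_le_one (T / ε)]
      nlinarith
    have h1 : ∀ᶠ ε in nhdsWithin (0:ℝ) (Set.Ioi 0),
        abs (∫ τ in (0:ℝ)..T, |Real.cos (τ / ε)|) < T / 4 := by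
      have := Metric.tendsto_nhds.1 h (T / 4) (by linarith)
      filter_upwards [this] with ε hε
      simpa [Real.dist_eq] using hε
    have h2 : ∀ᶠ ε in nhdsWithin (0:ℝ) (Set.Ioi 0), ε ∈ Set.Ioo (0:ℝ) (T / 2) :=
      Ioo_mem_nhdsGT_of_mem (Set.mem_Ico.2 ⟨le_refl 0, by linarith⟩)
    obtain ⟨ε, hεa, hεb⟩ := (h1.and h2).exists
    have h3 := hlow ε hεb.1
    have h4 : T / 2 - ε / 2 > T / 4 := by
      obtain ⟨he1, he2⟩ := hεb
      linarith
    have h5 := abs_lt.1 hεa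
    linarith
end
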